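/- arXiv:2108.02715 — 6 statements merged into one kernel-verified Lean document; each statement's English description precedes it below -/
import Mathlib

section
/- For every natural number k ≥ 1, real p ∈ (0,1], and real q ≥ 1, the probability that a binomial B(k,p) random variable X̂ satisfies X̂ ≤ k·p/q is at most (e^{1/q - 1}·q^{1/q})^{p·k}. (Chernoff bound for the under-estimation probability of sampling-based cardinality estimation with replacement.) -/
open Classical in
/-- Probability that a binomial B(k,p) random variable satisfies predicate `P`. -/
noncomputable def binomProb (k : ℕ) (p : ℝ) (P : ℕ → Prop) : ℝ :=
  ∑ i ∈ Finset.range (k + 1),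
    if P i then (k.choose i : ℝ) * p ^ i * (1 - p) ^ (k - i) else 0

theorem chernoff_underestimation (k : ℕ) (hk : 1 ≤ k) (p : ℝ) (hp0 : 0 < p) (hp1 : p ≤ 1)
    (q : ℝ) (hq : 1 ≤ q) :
    binomProb k p (fun i => (i : ℝ) ≤ k * p / q) ≤
      (Real.exp (1 / q - 1) * q ^ (1 / q)) ^ (p * k) := by
  have hq0 : (0:ℝ) < q := lt_of_lt_of_le one_pos hq
  set a : ℝ := (k : ℝ) * p / q with ha
  have hw : ∀ i, 0 ≤ (k.choose i : ℝ) * p ^ i * (1 - p) ^ (k - i) := by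
    intro i
    exact mul_nonneg (mul_nonneg (by positivity) (by positivity))
      (pow_nonneg (by linarith) _)
  have key1 : binomProb k p (fun i => (i:ℝ) ≤ a) ≤
      ∑ i ∈ Finset.range (k+1),
        q ^ (a - (i:ℝ)) * ((k.choose i : ℝ) * p ^ i * (1 - p) ^ (k - i)) := by
    unfold binomProb
    apply Finset.sum_le_sum
    intro i _
    by_cases h : (i:ℝ) ≤ a
    · simp only [h, if_true]
      have h1 : (1:ℝ) ≤ q ^ (a - (i:ℝ)) := by
        have := Real.rpow_le_rpow_of_exponent_le hq (show (0:ℝ) ≤ a - i by linarith)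
        rwa [Real.rpow_zero] at this
      nlinarith [hw i, h1]
    · simp only [h, if_false]
      exact mul_nonneg (Real.rpow_nonneg hq0.le _) (hw i)
  have key2 : (∑ i ∈ Finset.range (k+1),
        q ^ (a - (i:ℝ)) * ((k.choose i : ℝ) * p ^ i * (1 - p) ^ (k - i)))
      = q ^ a * (p/q + (1-p))^k := by
    rw [add_pow, Finset.mul_sum]
    apply Finset.sum_congr rfl
    intro i _
    rw [Real.rpow_sub hq0, Real.rpow_natCast, div_pow]
    have hqi : (q:ℝ)^i ≠ 0 := pow_ne_zero _ (ne_of_gt hq0)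
    field_simp
  have hbase : 0 ≤ p/q + (1-p) :=
    add_nonneg (div_nonneg hp0.le hq0.le) (by linarith)
  have key3 : (p/q + (1-p))^k ≤ Real.exp (p*(1/q-1)) ^ k := by
    apply pow_le_pow_left₀ hbase
    have h2 : p*(1/q-1) + 1 = p/q + (1-p) := by ring
    linarith [Real.add_one_le_exp (p*(1/q-1))]
  have hrhs : (Real.exp (1/q-1) * q ^ ((1/q):ℝ)) ^ (p * (k:ℝ)) =
      Real.exp (p*(1/q-1)) ^ k * q ^ a := by
    rw [Real.mul_rpow (Real.exp_pos _).le (Real.rpow_nonneg hq0.le _)]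
    congr 1
    · rw [← Real.exp_mul, ← Real.exp_nat_mul, Real.exp_eq_exp]
      ring
    · rw [← Real.rpow_mul hq0.le]
      congr 1
      rw [ha]; ring
  calc binomProb k p (fun i => (i:ℝ) ≤ a) ≤ _ := key1
    _ = q ^ a * (p/q + (1-p))^k := key2
    _ ≤ q ^ a * Real.exp (p*(1/q-1)) ^ k := by
        apply mul_le_mul_of_nonneg_left key3 (Real.rpow_nonneg hq0.le _)
    _ = (Real.exp (1/q-1) * q ^ ((1/q):ℝ)) ^ (p * (k:ℝ)) := by rw [hrhs]; ring
end

section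
/- For every natural number k ≥ 1, real p ∈ (0,1], and real q ≥ 1, a binomial B(k,p) random variable X̂ satisfies P(k·p/q ≤ X̂ ≤ q·k·p) ≥ 1 − (e^{q-1}/q^q)^{p·k} − (e^{1/q-1}·q^{1/q})^{p·k}. (Bound 1: Q-error bound from the Chernoff bound for uniform sampling with replacement.) -/
open Classical in
lemma binom_sum_aux (k : ℕ) (x y : ℝ) :
    ∑ i ∈ Finset.range (k + 1), (k.choose i : ℝ) * x ^ i * y ^ (k - i) = (x + y) ^ k := by
  rw [add_pow]
  exact Finset.sum_congr rfl fun i _ => by ring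

open Classical in
lemma binomProb_nonneg (k : ℕ) (p : ℝ) (hp0 : 0 ≤ p) (hp1 : p ≤ 1) (P : ℕ → Prop) :
    0 ≤ binomProb k p P := by
  have h1p : (0:ℝ) ≤ 1 - p := by linarith
  apply Finset.sum_nonneg
  intro i _
  split
  · exact mul_nonneg (mul_nonneg (Nat.cast_nonneg _) (pow_nonneg hp0 _)) (pow_nonneg h1p _)
  · exact le_refl 0

open Classical in
lemma binomProb_compl (k : ℕ) (p : ℝ) (P : ℕ → Prop) :
    binomProb k p P = (p + (1 - p)) ^ k - binomProb k p (fun i => ¬ P i) := by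
  have h : binomProb k p P + binomProb k p (fun i => ¬ P i) = (p + (1 - p)) ^ k := by
    rw [binomProb, binomProb, ← Finset.sum_add_distrib, ← binom_sum_aux k p (1 - p)]
    apply Finset.sum_congr rfl
    intro i _
    by_cases h : P i <;> simp [h]
  linarith

open Classical in
lemma binomProb_or_le (k : ℕ) (p : ℝ) (hp0 : 0 ≤ p) (hp1 : p ≤ 1) (P Q : ℕ → Prop) :
    binomProb k p (fun i => P i ∨ Q i) ≤ binomProb k p P + binomProb k p Q := by
  rw [binomProb, binomProb, binomProb, ← Finset.sum_add_distrib]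
  apply Finset.sum_le_sum
  intro i _
  have h1p : (0:ℝ) ≤ 1 - p := by linarith
  have hc : (0:ℝ) ≤ (k.choose i : ℝ) * p ^ i * (1 - p) ^ (k - i) :=
    mul_nonneg (mul_nonneg (Nat.cast_nonneg _) (pow_nonneg hp0 _)) (pow_nonneg h1p _)
  by_cases hP : P i <;> by_cases hQ : Q i <;> simp [hP, hQ] <;> linarith

open Classical in
/-- Generic Chernoff-type bound. -/
lemma binomProb_chernoff (k : ℕ) (p r T : ℝ) (hp0 : 0 ≤ p) (hp1 : p ≤ 1) (hr : 0 < r)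
    (P : ℕ → Prop) (hP : ∀ i : ℕ, P i → r ^ T ≤ r ^ (i : ℝ)) :
    binomProb k p P ≤ r ^ (-T) * (p * r + (1 - p)) ^ k := by
  have hrT : 0 < r ^ T := Real.rpow_pos_of_pos hr T
  calc binomProb k p P
      ≤ ∑ i ∈ Finset.range (k + 1),
          r ^ (-T) * ((k.choose i : ℝ) * (p * r) ^ i * (1 - p) ^ (k - i)) := by
        apply Finset.sum_le_sum
        intro i _
        have h1p : (0:ℝ) ≤ 1 - p := by linarith
        have hc : (0:ℝ) ≤ (k.choose i : ℝ) * p ^ i * (1 - p) ^ (k - i) :=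
          mul_nonneg (mul_nonneg (Nat.cast_nonneg _) (pow_nonneg hp0 _)) (pow_nonneg h1p _)
        split
        · rename_i hPi
          have h1 : r ^ T ≤ r ^ (i : ℝ) := hP i hPi
          have h2 : r ^ ((i : ℝ)) = r ^ i := Real.rpow_natCast r i
          have h3 : (1:ℝ) ≤ r ^ (-T) * r ^ i := by
            rw [Real.rpow_neg hr.le]
            rw [← h2]
            rw [inv_mul_eq_div, le_div_iff₀ hrT, one_mul]
            exact h1
          have h4 : r ^ (-T) * ((k.choose i : ℝ) * (p * r) ^ i * (1 - p) ^ (k - i))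
              = (r ^ (-T) * r ^ i) * ((k.choose i : ℝ) * p ^ i * (1 - p) ^ (k - i)) := by
            rw [mul_pow]; ring
          rw [h4]
          nlinarith [mul_le_mul_of_nonneg_right h3 hc]
        · exact mul_nonneg (Real.rpow_nonneg hr.le _)
            (mul_nonneg (mul_nonneg (Nat.cast_nonneg _)
              (pow_nonneg (mul_nonneg hp0 hr.le) _)) (pow_nonneg h1p _))
    _ = r ^ (-T) * (p * r + (1 - p)) ^ k := by
        rw [← Finset.mul_sum, binom_sum_aux]

theorem qerror_bound_chernoff (k : ℕ) (hk : 1 ≤ k) (p : ℝ) (hp0 : 0 < p) (hp1 : p ≤ 1)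
    (q : ℝ) (hq : 1 ≤ q) :
    1 - (Real.exp (q - 1) / q ^ q) ^ (p * k)
      - (Real.exp (1 / q - 1) * q ^ (1 / q)) ^ (p * k) ≤
    binomProb k p (fun i => k * p / q ≤ (i : ℝ) ∧ (i : ℝ) ≤ q * k * p) := by
  classical
  have hq0 : (0:ℝ) < q := lt_of_lt_of_le one_pos hq
  have hk0 : (0:ℝ) < (k : ℝ) := by exact_mod_cast hk
  set L : ℝ := k * p / q with hL
  set U : ℝ := q * k * p with hU
  have hL0 : 0 ≤ L := by positivity
  have hU0 : 0 ≤ U := by positivity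
  -- upper tail
  have hupper : binomProb k p (fun i => U < (i : ℝ)) ≤ (Real.exp (q - 1) / q ^ q) ^ (p * k) := by
    have h1 : binomProb k p (fun i => U < (i : ℝ)) ≤ q ^ (-U) * (p * q + (1 - p)) ^ k := by
      apply binomProb_chernoff k p q U hp0.le hp1 hq0 _
      intro i hi
      exact Real.rpow_le_rpow_of_exponent_le hq hi.le
    have h2 : (p * q + (1 - p)) ^ k ≤ Real.exp (p * (q - 1)) ^ k := by
      apply pow_le_pow_left₀ (by nlinarith) _ k
      have := Real.add_one_le_exp (p * (q - 1))
      linarith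
    have h3 : q ^ (-U) * Real.exp (p * (q - 1)) ^ k = (Real.exp (q - 1) / q ^ q) ^ (p * k) := by
      rw [Real.div_rpow (Real.exp_pos _).le (Real.rpow_nonneg hq0.le q)]
      rw [← Real.exp_mul, ← Real.rpow_mul hq0.le]
      rw [← Real.exp_nat_mul]
      rw [Real.rpow_neg hq0.le, div_eq_mul_inv]
      have e1 : (q - 1) * (p * k) = (k : ℝ) * (p * (q - 1)) := by ring
      have e2 : q * (p * k) = U := by rw [hU]; ring
      rw [e1, e2, mul_comm]
    calc binomProb k p (fun i => U < (i : ℝ))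
        ≤ q ^ (-U) * (p * q + (1 - p)) ^ k := h1
      _ ≤ q ^ (-U) * Real.exp (p * (q - 1)) ^ k := by
          apply mul_le_mul_of_nonneg_left h2 (Real.rpow_nonneg hq0.le _)
      _ = (Real.exp (q - 1) / q ^ q) ^ (p * k) := h3
  -- lower tail
  have hlower : binomProb k p (fun i => (i : ℝ) < L)
      ≤ (Real.exp (1 / q - 1) * q ^ (1 / q)) ^ (p * k) := by
    have hr : (0:ℝ) < 1 / q := by positivity
    have hr1 : 1 / q ≤ 1 := by rw [div_le_one hq0]; exact hq
    have h1 : binomProb k p (fun i => (i : ℝ) < L) ≤ (1/q) ^ (-L) * (p * (1/q) + (1 - p)) ^ k := by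
      apply binomProb_chernoff k p (1/q) L hp0.le hp1 hr _
      intro i hi
      exact Real.rpow_le_rpow_of_exponent_ge hr hr1 hi.le
    have h2 : (p * (1/q) + (1 - p)) ^ k ≤ Real.exp (p * (1/q - 1)) ^ k := by
      apply pow_le_pow_left₀ (by nlinarith [mul_le_one₀ hp1 hr.le hr1]) _ k
      have := Real.add_one_le_exp (p * (1/q - 1))
      linarith
    have h3 : (1/q) ^ (-L) * Real.exp (p * (1/q - 1)) ^ k
        = (Real.exp (1/q - 1) * q ^ (1/q)) ^ (p * k) := by
      rw [Real.mul_rpow (Real.exp_pos _).le (Real.rpow_nonneg hq0.le _)]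
      rw [← Real.exp_mul, ← Real.rpow_mul hq0.le]
      rw [← Real.exp_nat_mul]
      have e1 : (1/q - 1) * (p * k) = (k : ℝ) * (p * (1/q - 1)) := by ring
      have e2 : 1/q * (p * k) = L := by rw [hL]; ring
      have e3 : (1/q : ℝ) ^ (-L) = q ^ L := by
        rw [one_div, Real.inv_rpow hq0.le, Real.rpow_neg (by positivity), inv_inv]
      rw [e1, e2, e3, mul_comm]
    calc binomProb k p (fun i => (i : ℝ) < L)
        ≤ (1/q) ^ (-L) * (p * (1/q) + (1 - p)) ^ k := h1
      _ ≤ (1/q) ^ (-L) * Real.exp (p * (1/q - 1)) ^ k := by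
          apply mul_le_mul_of_nonneg_left h2 (Real.rpow_nonneg hr.le _)
      _ = (Real.exp (1/q - 1) * q ^ (1/q)) ^ (p * k) := h3
  -- combine
  have hcompl := binomProb_compl k p (fun i => L ≤ (i : ℝ) ∧ (i : ℝ) ≤ U)
  have hone : (p + (1 - p)) ^ k = 1 := by norm_num
  have hnegiff : binomProb k p (fun i => ¬ (L ≤ (i : ℝ) ∧ (i : ℝ) ≤ U))
      = binomProb k p (fun i => (i : ℝ) < L ∨ U < (i : ℝ)) := by
    unfold binomProb
    apply Finset.sum_congr rfl
    intro i _
    congr 1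
    simp only [eq_iff_iff, not_and_or, not_le]
  have hor := binomProb_or_le k p hp0.le hp1 (fun i => (i : ℝ) < L) (fun i => U < (i : ℝ))
  rw [hone] at hcompl
  rw [hcompl, hnegiff]
  linarith
end

section
/- For every natural number k ≥ 1, real p ∈ (0,1], and real q > 1, the probability that a binomial B(k,p) random variable X̂ satisfies X̂ > k·p·q is at most exp(−k·(pq−p)² / (2σ² + 2(pq−p)/3)), where σ² = p(1−p). (Bernstein bound for the over-estimation probability of sampling with replacement.) -/
section BernsteinAux
open Real

lemma nonneg_of_deriv {F F' : ℝ → ℝ} (hd : ∀ x, HasDerivAt F (F' x) x)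
    (h0 : F 0 = 0) (h' : ∀ x, 0 ≤ x → 0 ≤ F' x) {t : ℝ} (ht : 0 ≤ t) : 0 ≤ F t := by
  have mono : MonotoneOn F (Set.Ici 0) := by
    apply monotoneOn_of_deriv_nonneg (convex_Ici 0)
    · exact fun x _ => (hd x).continuousAt.continuousWithinAt
    · intro x _
      exact (hd x).differentiableAt.differentiableWithinAt
    · intro x hx
      rw [interior_Ici] at hx
      rw [(hd x).deriv]
      exact h' x hx.le
  have := mono Set.self_mem_Ici (Set.mem_Ici.2 ht) ht
  linarith

lemma hasDerivAt_exp_mul (c t : ℝ) :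
    HasDerivAt (fun x => Real.exp (c*x)) (c * Real.exp (c*t)) t := by
  simpa [mul_comm, Function.comp_def] using ((Real.hasDerivAt_exp (c*t)).comp t ((hasDerivAt_id t).const_mul c))

lemma G1_nonneg {t : ℝ} (ht : 0 ≤ t) :
    0 ≤ t - ((Real.exp t - 1)*(1 - t/3) + (Real.exp t - 1 - t)*(-(1/3))) := by
  apply nonneg_of_deriv (F' := fun x => (1 - Real.exp x + x * Real.exp x)/3) ?_ (by simp) ?_ ht
  · intro x
    have h : HasDerivAt (fun y : ℝ => y - ((Real.exp y - 1)*(1 - y/3) + (Real.exp y - 1 - y)*(-(1/3))))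
        (1 - ((Real.exp x)*(1 - x/3) + (Real.exp x - 1)*(-(1/3)) + ((Real.exp x - 1)*(-(1/3)) + (Real.exp x - 1 - x)*0))) x := by
      have h0 := (hasDerivAt_id x).sub ((((Real.hasDerivAt_exp x).sub_const 1).mul
        ((hasDerivAt_const x (1:ℝ)).sub ((hasDerivAt_id x).div_const 3))).add
        ((((Real.hasDerivAt_exp x).sub_const 1).sub (hasDerivAt_id x)).mul (hasDerivAt_const x (-(1/3)))))
      simp only [id_eq, Pi.sub_def, Pi.add_def, Pi.mul_def] at h0
      exact h0.congr_deriv (by ring)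
    convert h using 1
    ring
  · intro x hx
    have := Real.add_one_le_exp (-x)
    have hx1 : Real.exp (-x) * Real.exp x = 1 := by rw [← Real.exp_add]; simp
    have hxe : 0 < Real.exp x := Real.exp_pos x
    nlinarith [Real.exp_pos (-x)]

lemma G_nonneg {t : ℝ} (ht : 0 ≤ t) :
    0 ≤ t^2/2 - (Real.exp t - 1 - t)*(1 - t/3) := by
  apply nonneg_of_deriv
    (F' := fun x => x - ((Real.exp x - 1)*(1 - x/3) + (Real.exp x - 1 - x)*(-(1/3)))) ?_ (by simp) ?_ ht
  · intro x
    have h : HasDerivAt (fun y : ℝ => y^2/2 - (Real.exp y - 1 - y)*(1 - y/3))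
        ((2*x^1)/2 - ((Real.exp x - 1)*(1 - x/3) + (Real.exp x - 1 - x)*(-(1/3)))) x := by
      have h2 : HasDerivAt (fun y : ℝ => y^2/2) ((2*x^1)/2) x := by
        simpa using (hasDerivAt_pow 2 x).div_const 2
      have h0 := h2.sub ((((Real.hasDerivAt_exp x).sub_const 1).sub (hasDerivAt_id x)).mul
        ((hasDerivAt_const x (1:ℝ)).sub ((hasDerivAt_id x).div_const 3)))
      simp only [id_eq, Pi.sub_def, Pi.add_def, Pi.mul_def] at h0
      exact h0.congr_deriv (by ring)
    convert h using 1
    ring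
  · intro x hx
    exact G1_nonneg hx

lemma exp_sub_le {t : ℝ} (ht : 0 ≤ t) (ht3 : t < 3) :
    Real.exp t - 1 - t ≤ t^2 / (2*(1 - t/3)) := by
  have h3 : 0 < 1 - t/3 := by linarith
  rw [le_div_iff₀ (by positivity)]
  nlinarith [G_nonneg ht]

lemma mgf_aux {p t : ℝ} (hp0 : 0 ≤ p) (hp1 : p ≤ 1) (ht : 0 ≤ t) :
    (1-p)*Real.exp ((-p)*t) + p*Real.exp ((1-p)*t) ≤ 1 + p*(1-p)*(Real.exp t - 1 - t) := by
  have h : 0 ≤ (fun x => 1 + p*(1-p)*(Real.exp x - 1 - x)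
      - ((1-p)*Real.exp ((-p)*x) + p*Real.exp ((1-p)*x))) t := by
    apply nonneg_of_deriv (F' := fun x => p*(1-p)*(Real.exp x - 1)
      - ((1-p)*((-p)*Real.exp ((-p)*x)) + p*((1-p)*Real.exp ((1-p)*x)))) ?_ (by norm_num) ?_ ht
    · intro x
      have h0 := ((((Real.hasDerivAt_exp x).sub_const 1).sub (hasDerivAt_id x)).const_mul
          (p*(1-p))).const_add 1 |>.sub
        ((((hasDerivAt_exp_mul (-p) x).const_mul (1-p))).add
          ((hasDerivAt_exp_mul (1-p) x).const_mul p))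
      simp only [id_eq, Pi.sub_def, Pi.add_def, Pi.mul_def] at h0
      exact h0.congr_deriv (by ring)
    · intro x hx
      have hA : Real.exp ((-p)*x) ≤ Real.exp ((1-p)*x) := by
        apply Real.exp_le_exp.2; nlinarith
      have hB : 1 ≤ Real.exp (p*x) := Real.one_le_exp (by positivity)
      have e1 : Real.exp ((-p)*x) * Real.exp (p*x) = 1 := by
        rw [← Real.exp_add]; norm_num
      have e2 : Real.exp ((1-p)*x) * Real.exp (p*x) = Real.exp x := by
        rw [← Real.exp_add]; ring_nf
      have hpp : 0 ≤ p*(1-p) := by nlinarith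
      have hkey : 0 ≤ (Real.exp ((1-p)*x) - Real.exp ((-p)*x)) * (Real.exp (p*x) - 1) :=
        mul_nonneg (by linarith) (by linarith)
      have hG : 0 ≤ Real.exp x - 1 + Real.exp ((-p)*x) - Real.exp ((1-p)*x) := by
        nlinarith [hkey, e1, e2]
      have := mul_nonneg hpp hG
      nlinarith [this]
  simp only at h
  linarith

lemma mgf_bound {p t : ℝ} (hp0 : 0 ≤ p) (hp1 : p ≤ 1) (ht : 0 ≤ t) :
    1 - p + p * Real.exp t ≤ Real.exp (p*t + p*(1-p)*(Real.exp t - 1 - t)) := by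
  have key : (1-p)*Real.exp ((-p)*t) + p*Real.exp ((1-p)*t)
      ≤ Real.exp (p*(1-p)*(Real.exp t - 1 - t)) := by
    refine (mgf_aux hp0 hp1 ht).trans ?_
    linarith [Real.add_one_le_exp (p*(1-p)*(Real.exp t - 1 - t))]
  have h2 := mul_le_mul_of_nonneg_right key (Real.exp_pos (p*t)).le
  have e1 : Real.exp ((-p)*t) * Real.exp (p*t) = 1 := by
    rw [← Real.exp_add]; norm_num
  have e2 : Real.exp ((1-p)*t) * Real.exp (p*t) = Real.exp t := by
    rw [← Real.exp_add]; ring_nf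
  have e3 : Real.exp (p*(1-p)*(Real.exp t - 1 - t)) * Real.exp (p*t)
      = Real.exp (p*t + p*(1-p)*(Real.exp t - 1 - t)) := by
    rw [← Real.exp_add]; ring_nf
  nlinarith [h2]

open Classical in
lemma chernoff (k : ℕ) (p a t : ℝ) (hp0 : 0 ≤ p) (hp1 : p ≤ 1) (ht : 0 ≤ t) :
    (∑ i ∈ Finset.range (k+1),
      if a < (i:ℝ) then (k.choose i : ℝ) * p ^ i * (1 - p) ^ (k - i) else 0)
    ≤ Real.exp (-(t*a)) * (p * Real.exp t + (1 - p))^k := by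
  calc (∑ i ∈ Finset.range (k+1),
      if a < (i:ℝ) then (k.choose i : ℝ) * p ^ i * (1 - p) ^ (k - i) else 0)
    _ ≤ ∑ i ∈ Finset.range (k+1),
        Real.exp (t*i - t*a) * ((k.choose i : ℝ) * p ^ i * (1 - p) ^ (k - i)) := by
        apply Finset.sum_le_sum
        intro i _
        have h1p : (0:ℝ) ≤ 1 - p := by linarith
        have hw : (0:ℝ) ≤ (k.choose i : ℝ) * p ^ i * (1 - p) ^ (k - i) := by positivity
        by_cases hcase : a < (i:ℝ)
        · rw [if_pos hcase]
          have h1 : (1:ℝ) ≤ Real.exp (t*i - t*a) := Real.one_le_exp (by nlinarith)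
          nlinarith
        · rw [if_neg hcase]
          positivity
    _ = Real.exp (-(t*a)) * ∑ i ∈ Finset.range (k+1),
        (k.choose i : ℝ) * (p * Real.exp t) ^ i * (1 - p) ^ (k - i) := by
        rw [Finset.mul_sum]
        apply Finset.sum_congr rfl
        intro i _
        rw [show t*(i:ℝ) - t*a = -(t*a) + (i:ℝ)*t by ring, Real.exp_add, Real.exp_nat_mul,
          mul_pow]
        ring
    _ = Real.exp (-(t*a)) * (p * Real.exp t + (1 - p))^k := by
        rw [add_pow]
        congr 1
        apply Finset.sum_congr rfl
        intro i _
        ring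

lemma opt_bound (σ2 ε : ℝ) (hσ2 : 0 < σ2) (hε : 0 < ε) :
    σ2*(Real.exp (ε/(σ2+ε/3)) - 1 - ε/(σ2+ε/3)) - (ε/(σ2+ε/3))*ε ≤ -(ε^2)/(2*σ2+2*ε/3) := by
  have hD : (0:ℝ) < σ2 + ε/3 := by linarith
  have ht0 : 0 ≤ ε/(σ2+ε/3) := by positivity
  have ht3 : ε/(σ2+ε/3) < 3 := by rw [div_lt_iff₀ hD]; linarith
  have hg := exp_sub_le ht0 ht3
  have hmul := mul_le_mul_of_nonneg_left hg hσ2.le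
  have h1 : (0:ℝ) < 1 - (ε/(σ2+ε/3))/3 := by linarith
  have heq : σ2 * ((ε/(σ2+ε/3))^2/(2*(1 - (ε/(σ2+ε/3))/3))) - (ε/(σ2+ε/3))*ε
      = -(ε^2)/(2*σ2 + 2*ε/3) := by
    have h2 : (2:ℝ)*σ2 + 2*ε/3 ≠ 0 := by positivity
    have hne : σ2 + ε/3 ≠ 0 := hD.ne'
    have hsimp : 1 - (ε/(σ2+ε/3))/3 = σ2/(σ2+ε/3) := by
      field_simp
      ring
    rw [hsimp]
    field_simp
    ring
  linarith


end BernsteinAux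


theorem bernstein_overestimation (k : ℕ) (hk : 1 ≤ k) (p : ℝ) (hp0 : 0 < p) (hp1 : p ≤ 1)
    (q : ℝ) (hq : 1 < q) :
    binomProb k p (fun i => (k : ℝ) * p * q < (i : ℝ)) ≤
      Real.exp (-(k * (p * q - p) ^ 2) / (2 * (p * (1 - p)) + 2 * (p * q - p) / 3)) := by
  unfold binomProb
  by_cases hpq : p * q < 1
  · have hp1' : p < 1 := by nlinarith
    have hσ2pos : (0:ℝ) < p*(1-p) := by nlinarith
    have hεpos : (0:ℝ) < p*q - p := by nlinarith
    have hDpos : (0:ℝ) < p*(1-p) + (p*q-p)/3 := by linarith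
    have htpos : (0:ℝ) < (p*q-p)/(p*(1-p)+(p*q-p)/3) := by positivity
    -- Chernoff
    have hcher := chernoff k p ((k:ℝ)*p*q) ((p*q-p)/(p*(1-p)+(p*q-p)/3)) hp0.le hp1 htpos.le
    refine hcher.trans ?_
    set t : ℝ := (p*q-p)/(p*(1-p)+(p*q-p)/3) with hT
    have hmgf := mgf_bound hp0.le hp1 htpos.le
    have hbase : (0:ℝ) ≤ p * Real.exp t + (1 - p) := by
      have := Real.exp_pos t; nlinarith
    have hpow : (p * Real.exp t + (1 - p))^k
        ≤ (Real.exp (p*t + p*(1-p)*(Real.exp t - 1 - t)))^k := by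
      apply pow_le_pow_left₀ hbase
      linarith
    have step2 : Real.exp (-(t*((k:ℝ)*p*q))) * (p * Real.exp t + (1 - p))^k
        ≤ Real.exp ((k:ℝ)*(p*t + p*(1-p)*(Real.exp t - 1 - t)) - t*((k:ℝ)*p*q)) := by
      have h5 := mul_le_mul_of_nonneg_left hpow (Real.exp_pos (-(t*((k:ℝ)*p*q)))).le
      refine h5.trans_eq ?_
      rw [← Real.exp_nat_mul, ← Real.exp_add]
      congr 1
      ring
    refine step2.trans ?_
    apply Real.exp_le_exp.2
    have hopt := opt_bound (p*(1-p)) (p*q-p) hσ2pos hεpos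
    rw [← hT] at hopt
    have hk0 : (0:ℝ) ≤ (k:ℝ) := Nat.cast_nonneg k
    have h3 := mul_le_mul_of_nonneg_left hopt hk0
    have h4 : (k:ℝ)*(-((p*q-p)^2)/(2*(p*(1-p))+2*(p*q-p)/3))
        = -((k:ℝ)*(p*q-p)^2)/(2*(p*(1-p))+2*(p*q-p)/3) := by ring
    have h1 : (k:ℝ)*(p*t + p*(1-p)*(Real.exp t - 1 - t)) - t*((k:ℝ)*p*q)
        = (k:ℝ)*(p*(1-p)*(Real.exp t - 1 - t) - t*(p*q-p)) := by ring
    rw [h1]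
    calc (k:ℝ)*(p*(1-p)*(Real.exp t - 1 - t) - t*(p*q-p))
        ≤ (k:ℝ)*(-((p*q-p)^2)/(2*(p*(1-p))+2*(p*q-p)/3)) := h3
      _ = -((k:ℝ)*(p*q-p)^2)/(2*(p*(1-p))+2*(p*q-p)/3) := h4
  · have hsum : (∑ i ∈ Finset.range (k+1),
        if (fun i => (k : ℝ) * p * q < (i : ℝ)) i then
          (k.choose i : ℝ) * p ^ i * (1 - p) ^ (k - i) else 0) = 0 := by
      apply Finset.sum_eq_zero
      intro i hi
      rw [if_neg]
      push_neg
      have hik : (i:ℝ) ≤ (k:ℝ) := by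
        have := Finset.mem_range_succ_iff.1 hi
        exact_mod_cast this
      have h1 : (1:ℝ) ≤ p*q := by linarith
      nlinarith
    rw [hsum]
    positivity
end

section
/- Theorem 1 (sampling with replacement): For every natural number k ≥ 1, real p ∈ (0,1], and real q > 1, a binomial B(k,p) random variable X̂ satisfies P(k·p/q ≤ X̂ ≤ q·k·p) ≥ 1 − Ω − Ψ, where σ² = p(1−p), Ω = min( (e^{q−1}/q^q)^{p·k} , exp(−k·(pq−p)²/(2σ² + 2(pq−p)/3)) ) and Ψ = min( (e^{1/q−1}·q^{1/q})^{p·k} , exp(−k·(p−p/q)²/(2σ² + 2(p−p/q)/3)) ). -/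
open Real

lemma exp_sub_linear (x : ℝ) : Real.exp x - 1 - x = ∑' n:ℕ, x^(n+2) / (n+2).factorial := by
  have hs : Summable (fun n : ℕ => x ^ n / n.factorial) := Real.summable_pow_div_factorial x
  have h := Summable.sum_add_tsum_nat_add' (f := fun n : ℕ => x ^ n / n.factorial) (k := 2)
    ((summable_nat_add_iff 2).2 hs)
  rw [Real.exp_eq_exp_ℝ, NormedSpace.exp_eq_tsum_div]
  simp [Finset.sum_range_succ] at h ⊢
  linarith

lemma summable_shift (x : ℝ) : Summable (fun n : ℕ => x^(n+2) / (n+2).factorial) :=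
  (summable_nat_add_iff 2).2 (Real.summable_pow_div_factorial x)

lemma exp_mul_le (l y : ℝ) (hl : 0 ≤ l) (hy : |y| ≤ 1) :
    Real.exp (l * y) ≤ 1 + l * y + y^2 * (Real.exp l - l - 1) := by
  have h1 := exp_sub_linear (l * y)
  have h2 := exp_sub_linear l
  have key : ∑' n:ℕ, (l*y)^(n+2) / (n+2).factorial ≤ ∑' n:ℕ, y^2 * (l^(n+2) / (n+2).factorial) := by
    apply Summable.tsum_le_tsum _ (summable_shift (l*y)) ((summable_shift l).mul_left _)
    intro n
    have hfac : (0:ℝ) < ((n+2).factorial : ℝ) := by positivity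
    have heq : y^2 * (l^(n+2) / ((n+2).factorial:ℝ)) = l^(n+2) * y^2 / ((n+2).factorial:ℝ) := by
      ring
    rw [heq, mul_pow, div_le_div_iff_of_pos_right hfac]
    apply mul_le_mul_of_nonneg_left _ (by positivity)
    calc y^(n+2) ≤ |y^(n+2)| := le_abs_self _
      _ = |y|^(n+2) := by rw [abs_pow]
      _ ≤ |y|^2 := pow_le_pow_of_le_one (abs_nonneg y) hy (by omega)
      _ = y^2 := sq_abs y
  rw [tsum_mul_left] at key
  nlinarith [key, h1, h2]

lemma exp_sub_le_quad (l : ℝ) (hl : 0 ≤ l) (hl3 : l < 3) :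
    Real.exp l - l - 1 ≤ l^2 / (2 * (1 - l/3)) := by
  have h2 := exp_sub_linear l
  have hgeo : ∑' n:ℕ, (l/3)^n = (1 - l/3)⁻¹ :=
    tsum_geometric_of_lt_one (by positivity) (by linarith)
  have key : ∑' n:ℕ, l^(n+2) / (n+2).factorial ≤ ∑' n:ℕ, (l^2/2) * (l/3)^n := by
    apply Summable.tsum_le_tsum _ (summable_shift l)
      ((summable_geometric_of_lt_one (by positivity) (by linarith)).mul_left _)
    intro n
    have hfac : (2:ℝ) * 3^n ≤ ((n+2).factorial : ℝ) := by
      induction n with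
      | zero => norm_num
      | succ m ih =>
        have h3 : ((m+1+2).factorial : ℝ) = (m+3) * ((m+2).factorial:ℝ) := by
          have : (m+1+2) = (m+3) := by omega
          rw [this, Nat.factorial_succ]
          push_cast; ring
        rw [h3, pow_succ]
        nlinarith [ih, (by positivity : (0:ℝ) < (3:ℝ)^m)]
    have hpos : (0:ℝ) < ((n+2).factorial:ℝ) := by positivity
    have hrhs : (l^2/2) * (l/3)^n = l^(n+2) / (2 * 3^n) := by
      rw [div_pow, pow_add]
      ring
    rw [hrhs]
    apply div_le_div_of_nonneg_left (by positivity) (by positivity) hfac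
  rw [tsum_mul_left, hgeo] at key
  have h13 : (0:ℝ) < 1 - l/3 := by linarith
  rw [le_div_iff₀ (by linarith)]
  have := mul_le_mul_of_nonneg_right key (le_of_lt h13)
  calc (Real.exp l - l - 1) * (2 * (1 - l/3))
      = (Real.exp l - l - 1) * (1 - l/3) * 2 := by ring
    _ ≤ (l^2/2 * (1-l/3)⁻¹) * (1 - l/3) * 2 := by nlinarith [key, h13, h2]
    _ = l^2/2 * ((1-l/3)⁻¹ * (1 - l/3)) * 2 := by ring
    _ = l^2 := by rw [inv_mul_cancel₀ (ne_of_gt h13)]; ring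
lemma bennett_mgf_upper (p l : ℝ) (hp0 : 0 < p) (hp1 : p ≤ 1) (hl : 0 ≤ l) :
    (1 - p + p * Real.exp l) * Real.exp (-(l * p))
      ≤ Real.exp (p*(1-p)*(Real.exp l - l - 1)) := by
  have h1 := exp_mul_le l (1-p) hl (by rw [abs_le]; constructor <;> linarith)
  have h2 := exp_mul_le l (-p) hl (by rw [abs_le]; constructor <;> linarith)
  have e1 : Real.exp (l*(1-p)) = Real.exp l * Real.exp (-(l*p)) := by
    rw [← Real.exp_add]; ring_nf
  have e2 : Real.exp (l*(-p)) = Real.exp (-(l*p)) := by ring_nf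
  rw [e1] at h1; rw [e2] at h2
  have hE : 0 < Real.exp (-(l*p)) := Real.exp_pos _
  have hfin := Real.add_one_le_exp (p*(1-p)*(Real.exp l - l - 1))
  nlinarith [h1, h2, hp0.le, hE]

lemma bennett_mgf_lower (p l : ℝ) (hp0 : 0 < p) (hp1 : p ≤ 1) (hl : 0 ≤ l) :
    (1 - p + p * Real.exp (-l)) * Real.exp (l * p)
      ≤ Real.exp (p*(1-p)*(Real.exp l - l - 1)) := by
  have h1 := exp_mul_le l p hl (by rw [abs_le]; constructor <;> linarith)
  have h2 := exp_mul_le l (p-1) hl (by rw [abs_le]; constructor <;> linarith)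
  have e2 : Real.exp (l*(p-1)) = Real.exp (-l) * Real.exp (l*p) := by
    rw [← Real.exp_add]; ring_nf
  rw [e2] at h2
  have hE : 0 < Real.exp (l*p) := Real.exp_pos _
  have hfin := Real.add_one_le_exp (p*(1-p)*(Real.exp l - l - 1))
  nlinarith [h1, h2, hp0.le, hE]

lemma binom_mgf (k : ℕ) (p c : ℝ) :
    ∑ i ∈ Finset.range (k+1), (k.choose i : ℝ) * p^i * (1-p)^(k-i) * c^i
      = (1-p+p*c)^k := by
  rw [show (1:ℝ)-p+p*c = p*c + (1-p) by ring, add_pow]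
  apply Finset.sum_congr rfl
  intro i _
  rw [mul_pow]; ring

lemma tail_upper (k : ℕ) (p a l : ℝ) (hp0 : 0 ≤ p) (hp1 : p ≤ 1) (hl : 0 ≤ l) :
    ∑ i ∈ Finset.range (k+1), (if a < (i:ℝ) then (k.choose i : ℝ) * p^i * (1-p)^(k-i) else 0)
      ≤ Real.exp (-(l*a)) * (1-p+p*Real.exp l)^k := by
  have key : ∀ i ∈ Finset.range (k+1),
      (if a < (i:ℝ) then (k.choose i : ℝ) * p^i * (1-p)^(k-i) else 0)
        ≤ Real.exp (-(l*a)) * ((k.choose i : ℝ) * p^i * (1-p)^(k-i) * (Real.exp l)^i) := by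
    intro i _
    have hf : 0 ≤ (k.choose i : ℝ) * p^i * (1-p)^(k-i) :=
      mul_nonneg (mul_nonneg (Nat.cast_nonneg _) (pow_nonneg hp0 _))
        (pow_nonneg (by linarith) _)
    have hexp : Real.exp (-(l*a)) * (Real.exp l)^i = Real.exp (l*i - l*a) := by
      rw [← Real.exp_nat_mul, ← Real.exp_add]; ring_nf
    by_cases h : a < (i:ℝ)
    · rw [if_pos h]
      have h1 : (1:ℝ) ≤ Real.exp (-(l*a)) * (Real.exp l)^i := by
        rw [hexp]
        calc (1:ℝ) = Real.exp 0 := (Real.exp_zero).symm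
          _ ≤ Real.exp (l*i - l*a) := Real.exp_le_exp.2 (by nlinarith)
      calc (k.choose i : ℝ) * p^i * (1-p)^(k-i)
          = 1 * ((k.choose i : ℝ) * p^i * (1-p)^(k-i)) := by ring
        _ ≤ (Real.exp (-(l*a)) * (Real.exp l)^i) * ((k.choose i : ℝ) * p^i * (1-p)^(k-i)) :=
            mul_le_mul_of_nonneg_right h1 hf
        _ = Real.exp (-(l*a)) * ((k.choose i : ℝ) * p^i * (1-p)^(k-i) * (Real.exp l)^i) := by ring
    · rw [if_neg h]
      have := Real.exp_pos (-(l*a))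
      positivity
  calc _ ≤ ∑ i ∈ Finset.range (k+1),
        Real.exp (-(l*a)) * ((k.choose i : ℝ) * p^i * (1-p)^(k-i) * (Real.exp l)^i) :=
      Finset.sum_le_sum key
    _ = Real.exp (-(l*a)) * (1-p+p*Real.exp l)^k := by
        rw [← Finset.mul_sum, binom_mgf]

lemma tail_lower (k : ℕ) (p a l : ℝ) (hp0 : 0 ≤ p) (hp1 : p ≤ 1) (hl : 0 ≤ l) :
    ∑ i ∈ Finset.range (k+1), (if (i:ℝ) < a then (k.choose i : ℝ) * p^i * (1-p)^(k-i) else 0)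
      ≤ Real.exp (l*a) * (1-p+p*Real.exp (-l))^k := by
  have key : ∀ i ∈ Finset.range (k+1),
      (if (i:ℝ) < a then (k.choose i : ℝ) * p^i * (1-p)^(k-i) else 0)
        ≤ Real.exp (l*a) * ((k.choose i : ℝ) * p^i * (1-p)^(k-i) * (Real.exp (-l))^i) := by
    intro i _
    have hf : 0 ≤ (k.choose i : ℝ) * p^i * (1-p)^(k-i) :=
      mul_nonneg (mul_nonneg (Nat.cast_nonneg _) (pow_nonneg hp0 _))
        (pow_nonneg (by linarith) _)
    have hexp : Real.exp (l*a) * (Real.exp (-l))^i = Real.exp (l*a - l*i) := by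
      rw [← Real.exp_nat_mul, ← Real.exp_add]; ring_nf
    by_cases h : (i:ℝ) < a
    · rw [if_pos h]
      have h1 : (1:ℝ) ≤ Real.exp (l*a) * (Real.exp (-l))^i := by
        rw [hexp]
        calc (1:ℝ) = Real.exp 0 := (Real.exp_zero).symm
          _ ≤ Real.exp (l*a - l*i) := Real.exp_le_exp.2 (by nlinarith)
      calc (k.choose i : ℝ) * p^i * (1-p)^(k-i)
          = 1 * ((k.choose i : ℝ) * p^i * (1-p)^(k-i)) := by ring
        _ ≤ (Real.exp (l*a) * (Real.exp (-l))^i) * ((k.choose i : ℝ) * p^i * (1-p)^(k-i)) :=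
            mul_le_mul_of_nonneg_right h1 hf
        _ = Real.exp (l*a) * ((k.choose i : ℝ) * p^i * (1-p)^(k-i) * (Real.exp (-l))^i) := by ring
    · rw [if_neg h]
      have := Real.exp_pos (l*a)
      positivity
  calc _ ≤ ∑ i ∈ Finset.range (k+1),
        Real.exp (l*a) * ((k.choose i : ℝ) * p^i * (1-p)^(k-i) * (Real.exp (-l))^i) :=
      Finset.sum_le_sum key
    _ = Real.exp (l*a) * (1-p+p*Real.exp (-l))^k := by
        rw [← Finset.mul_sum, binom_mgf]

lemma U1 (k : ℕ) (p q : ℝ) (hp0 : 0 < p) (hp1 : p ≤ 1) (hq : 1 < q) :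
    Real.exp (-(Real.log q * (q*k*p))) * (1-p+p*Real.exp (Real.log q))^k
      ≤ (Real.exp (q-1) / q ^ q) ^ (p * k) := by
  have hq0 : 0 < q := by linarith
  rw [Real.exp_log hq0]
  have hqq : 0 < (q:ℝ) ^ (q:ℝ) := Real.rpow_pos_of_pos hq0 q
  have hbase : (0:ℝ) < Real.exp (q-1) / q ^ q := by positivity
  rw [Real.rpow_def_of_pos hbase]
  have hlog : Real.log (Real.exp (q-1) / q ^ q) = (q-1) - q * Real.log q := by
    rw [Real.log_div (Real.exp_ne_zero _) (ne_of_gt hqq), Real.log_exp, Real.log_rpow hq0]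
  rw [hlog]
  have h1 : (1-p+p*q)^k ≤ Real.exp ((q-1)*p) ^ k := by
    apply pow_le_pow_left₀ (by nlinarith)
    have := Real.add_one_le_exp ((q-1)*p)
    linarith
  calc Real.exp (-(Real.log q * (q*k*p))) * (1-p+p*q)^k
      ≤ Real.exp (-(Real.log q * (q*k*p))) * Real.exp ((q-1)*p) ^ k :=
        mul_le_mul_of_nonneg_left h1 (Real.exp_pos _).le
    _ = Real.exp (-(Real.log q * (q*k*p)) + k * ((q-1)*p)) := by
        rw [← Real.exp_nat_mul, ← Real.exp_add]
    _ ≤ Real.exp (((q-1) - q*Real.log q) * (p*k)) := by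
        apply Real.exp_le_exp.2 (le_of_eq (by ring))

lemma L1 (k : ℕ) (p q : ℝ) (hp0 : 0 < p) (hp1 : p ≤ 1) (hq : 1 < q) :
    Real.exp (Real.log q * (k*p/q)) * (1-p+p*Real.exp (-Real.log q))^k
      ≤ (Real.exp (1/q-1) * q ^ (1/q:ℝ)) ^ (p * k) := by
  have hq0 : 0 < q := by linarith
  have hinv : Real.exp (-Real.log q) = q⁻¹ := by
    rw [Real.exp_neg, Real.exp_log hq0]
  rw [hinv]
  have hqq : 0 < (q:ℝ) ^ (1/q:ℝ) := Real.rpow_pos_of_pos hq0 _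
  have hbase : (0:ℝ) < Real.exp (1/q-1) * q ^ (1/q:ℝ) := by positivity
  rw [Real.rpow_def_of_pos hbase]
  have hlog : Real.log (Real.exp (1/q-1) * q ^ (1/q:ℝ)) = (1/q-1) + (1/q) * Real.log q := by
    rw [Real.log_mul (Real.exp_ne_zero _) (ne_of_gt hqq), Real.log_exp, Real.log_rpow hq0]
  rw [hlog]
  have hb0 : (0:ℝ) ≤ 1-p+p*q⁻¹ := by
    have : 0 < p*q⁻¹ := by positivity
    linarith
  have h1 : (1-p+p*q⁻¹)^k ≤ Real.exp ((1/q-1)*p) ^ k := by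
    apply pow_le_pow_left₀ hb0
    have := Real.add_one_le_exp ((1/q-1)*p)
    have : (1/q-1)*p + 1 = 1-p+p*q⁻¹ := by field_simp; ring
    have h := Real.add_one_le_exp ((1/q-1)*p)
    linarith
  calc Real.exp (Real.log q * (k*p/q)) * (1-p+p*q⁻¹)^k
      ≤ Real.exp (Real.log q * (k*p/q)) * Real.exp ((1/q-1)*p) ^ k :=
        mul_le_mul_of_nonneg_left h1 (Real.exp_pos _).le
    _ = Real.exp (Real.log q * (k*p/q) + k * ((1/q-1)*p)) := by
        rw [← Real.exp_nat_mul, ← Real.exp_add]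
    _ ≤ Real.exp (((1/q-1) + (1/q)*Real.log q) * (p*k)) := by
        apply Real.exp_le_exp.2 (le_of_eq (by field_simp; ring))

lemma bern_core (s t : ℝ) (hs : 0 < s) (ht : 0 < t) :
    s * (Real.exp (t/(s+t/3)) - t/(s+t/3) - 1) - (t/(s+t/3))*t
      ≤ -(t^2)/(2*s+2*t/3) := by
  set l := t/(s+t/3) with hl_def
  have hc : 0 < s + t/3 := by linarith
  have hl0 : 0 ≤ l := by positivity
  have hl3 : l < 3 := by rw [hl_def, div_lt_iff₀ hc]; linarith
  have hg := exp_sub_le_quad l hl0 hl3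
  have h13 : 0 < 1 - l/3 := by linarith
  have halg : s * (l^2/(2*(1-l/3))) - l*t = -(t^2)/(2*s+2*t/3) := by
    rw [hl_def]
    have h1 : s + t/3 ≠ 0 := ne_of_gt hc
    have h2 : (2:ℝ)*s + 2*t/3 ≠ 0 := by positivity
    have h3 : (2:ℝ)*(1 - (t/(s+t/3))/3) = (2*s)/(s+t/3) := by field_simp; ring
    rw [h3]
    field_simp
    ring
  nlinarith [mul_le_mul_of_nonneg_left hg hs.le]

lemma U2 (k : ℕ) (p q : ℝ) (hp0 : 0 < p) (hp1 : p < 1) (hq : 1 < q) :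
    Real.exp (-(((p*q-p)/(p*(1-p)+(p*q-p)/3))*(q*k*p))) *
      (1-p+p*Real.exp ((p*q-p)/(p*(1-p)+(p*q-p)/3)))^k
      ≤ Real.exp (-(k*(p*q-p)^2) / (2*(p*(1-p)) + 2*(p*q-p)/3)) := by
  set s := p*(1-p) with hs_def
  set t := p*q-p with ht_def
  set l := t/(s+t/3) with hl_def
  have hs : 0 < s := by nlinarith
  have ht : 0 < t := by nlinarith
  have hl0 : 0 ≤ l := by positivity
  have e1 : Real.exp (-(l*(q*(k:ℝ)*p))) = (Real.exp (-(l*(p+t))))^k := by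
    rw [← Real.exp_nat_mul]; congr 1; rw [ht_def]; ring
  rw [e1, ← mul_pow]
  have hfac : Real.exp (-(l*(p+t))) * (1-p+p*Real.exp l)
      ≤ Real.exp (-(t^2)/(2*s+2*t/3)) := by
    have hb := bennett_mgf_upper p l hp0 hp1.le hl0
    have e2 : Real.exp (-(l*(p+t))) = Real.exp (-(l*p)) * Real.exp (-(l*t)) := by
      rw [← Real.exp_add]; congr 1; ring
    calc Real.exp (-(l*(p+t))) * (1-p+p*Real.exp l)
        = ((1-p+p*Real.exp l) * Real.exp (-(l*p))) * Real.exp (-(l*t)) := by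
          rw [e2]; ring
      _ ≤ Real.exp (s*(Real.exp l - l - 1)) * Real.exp (-(l*t)) :=
          mul_le_mul_of_nonneg_right (by rw [hs_def]; exact hb) (Real.exp_pos _).le
      _ = Real.exp (s*(Real.exp l - l - 1) - l*t) := by
          rw [← Real.exp_add]; congr 1 <;> ring
      _ ≤ Real.exp (-(t^2)/(2*s+2*t/3)) := Real.exp_le_exp.2 (by
          have := bern_core s t hs ht
          rw [← hl_def] at this
          linarith)
  calc (Real.exp (-(l*(p+t))) * (1-p+p*Real.exp l))^k
      ≤ (Real.exp (-(t^2)/(2*s+2*t/3)))^k := by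
        apply pow_le_pow_left₀ _ hfac
        have h1p : (0:ℝ) < 1 - p := by linarith
        have : (0:ℝ) < p*Real.exp l := by positivity
        positivity
    _ = Real.exp (-((k:ℝ)*t^2)/(2*s+2*t/3)) := by
        rw [← Real.exp_nat_mul]; congr 1; ring

lemma L2 (k : ℕ) (p q : ℝ) (hp0 : 0 < p) (hp1 : p < 1) (hq : 1 < q) :
    Real.exp (((p-p/q)/(p*(1-p)+(p-p/q)/3))*((k:ℝ)*p/q)) *
      (1-p+p*Real.exp (-((p-p/q)/(p*(1-p)+(p-p/q)/3))))^k
      ≤ Real.exp (-(k*(p-p/q)^2) / (2*(p*(1-p)) + 2*(p-p/q)/3)) := by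
  set s := p*(1-p) with hs_def
  set t := p-p/q with ht_def
  set l := t/(s+t/3) with hl_def
  have hq0 : 0 < q := by linarith
  have hs : 0 < s := by nlinarith
  have ht : 0 < t := by
    rw [ht_def]
    have : p/q < p := by rw [div_lt_iff₀ hq0]; nlinarith
    linarith
  have hl0 : 0 ≤ l := by positivity
  have e1 : Real.exp (l*((k:ℝ)*p/q)) = (Real.exp (l*(p-t)))^k := by
    rw [← Real.exp_nat_mul]; congr 1; rw [ht_def]; field_simp; ring
  rw [e1, ← mul_pow]
  have hfac : Real.exp (l*(p-t)) * (1-p+p*Real.exp (-l))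
      ≤ Real.exp (-(t^2)/(2*s+2*t/3)) := by
    have hb := bennett_mgf_lower p l hp0 hp1.le hl0
    have e2 : Real.exp (l*(p-t)) = Real.exp (l*p) * Real.exp (-(l*t)) := by
      rw [← Real.exp_add]; congr 1; ring
    calc Real.exp (l*(p-t)) * (1-p+p*Real.exp (-l))
        = ((1-p+p*Real.exp (-l)) * Real.exp (l*p)) * Real.exp (-(l*t)) := by
          rw [e2]; ring
      _ ≤ Real.exp (s*(Real.exp l - l - 1)) * Real.exp (-(l*t)) :=
          mul_le_mul_of_nonneg_right (by rw [hs_def]; exact hb) (Real.exp_pos _).le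
      _ = Real.exp (s*(Real.exp l - l - 1) - l*t) := by
          rw [← Real.exp_add]; congr 1 <;> ring
      _ ≤ Real.exp (-(t^2)/(2*s+2*t/3)) := Real.exp_le_exp.2 (by
          have := bern_core s t hs ht
          rw [← hl_def] at this
          linarith)
  calc (Real.exp (l*(p-t)) * (1-p+p*Real.exp (-l)))^k
      ≤ (Real.exp (-(t^2)/(2*s+2*t/3)))^k := by
        apply pow_le_pow_left₀ _ hfac
        have h1p : (0:ℝ) < 1 - p := by linarith
        have : (0:ℝ) < p*Real.exp (-l) := by positivity
        positivity
    _ = Real.exp (-((k:ℝ)*t^2)/(2*s+2*t/3)) := by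
        rw [← Real.exp_nat_mul]; congr 1; ring

theorem qerror_bound_with_replacement (k : ℕ) (hk : 1 ≤ k) (p : ℝ) (hp0 : 0 < p) (hp1 : p ≤ 1)
    (q : ℝ) (hq : 1 < q) :
    1 - min ((Real.exp (q - 1) / q ^ q) ^ (p * k))
          (Real.exp (-(k * (p * q - p) ^ 2) / (2 * (p * (1 - p)) + 2 * (p * q - p) / 3)))
      - min ((Real.exp (1 / q - 1) * q ^ (1 / q)) ^ (p * k))
          (Real.exp (-(k * (p - p / q) ^ 2) / (2 * (p * (1 - p)) + 2 * (p - p / q) / 3))) ≤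
    binomProb k p (fun i => k * p / q ≤ (i : ℝ) ∧ (i : ℝ) ≤ q * k * p) := by
  have hq0 : 0 < q := by linarith
  have h1p : (0:ℝ) ≤ 1 - p := by linarith
  have hk1 : (1:ℝ) ≤ (k:ℝ) := by exact_mod_cast hk
  have hf0 : ∀ i : ℕ, 0 ≤ (k.choose i : ℝ) * p^i * (1-p)^(k-i) := fun i =>
    mul_nonneg (mul_nonneg (Nat.cast_nonneg _) (pow_nonneg hp0.le _)) (pow_nonneg h1p _)
  have hite0 : ∀ (c : Prop) (inst : Decidable c) (x : ℝ), 0 ≤ x → 0 ≤ (@ite _ c inst x 0) := by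
    intro c inst x hx
    split
    · exact hx
    · exact le_rfl
  have hsum : ∑ i ∈ Finset.range (k+1), (k.choose i : ℝ) * p^i * (1-p)^(k-i) = 1 := by
    have h := binom_mgf k p 1
    simp only [one_pow, mul_one] at h
    rw [h, show (1:ℝ)-p+p = 1 by ring, one_pow]
  set Tlo := ∑ i ∈ Finset.range (k+1),
    (if (i:ℝ) < (k:ℝ)*p/q then (k.choose i : ℝ) * p^i * (1-p)^(k-i) else 0) with hTlo
  set Thi := ∑ i ∈ Finset.range (k+1),
    (if q*(k:ℝ)*p < (i:ℝ) then (k.choose i : ℝ) * p^i * (1-p)^(k-i) else 0) with hThi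
  have hmain : (1:ℝ) ≤ binomProb k p (fun i => k * p / q ≤ (i : ℝ) ∧ (i : ℝ) ≤ q * k * p)
      + (Tlo + Thi) := by
    rw [binomProb, hTlo, hThi, ← Finset.sum_add_distrib, ← Finset.sum_add_distrib]
    conv_lhs => rw [← hsum]
    apply Finset.sum_le_sum
    intro i _
    by_cases hPi : (k:ℝ) * p / q ≤ (i : ℝ) ∧ (i : ℝ) ≤ q * (k:ℝ) * p
    · rw [if_pos hPi]
      have hb := hite0 ((i:ℝ) < (k:ℝ)*p/q) inferInstance _ (hf0 i)
      have hc := hite0 (q*(k:ℝ)*p < (i:ℝ)) inferInstance _ (hf0 i)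
      linarith
    · rw [if_neg hPi]
      rw [not_and_or] at hPi
      rcases hPi with h | h
      · push_neg at h
        rw [if_pos h]
        have hc := hite0 (q*(k:ℝ)*p < (i:ℝ)) inferInstance _ (hf0 i)
        linarith
      · push_neg at h
        rw [if_pos h]
        have hb := hite0 ((i:ℝ) < (k:ℝ)*p/q) inferInstance _ (hf0 i)
        linarith
  have hThi_bound : Thi ≤ min ((Real.exp (q - 1) / q ^ q) ^ (p * k))
      (Real.exp (-(k * (p * q - p) ^ 2) / (2 * (p * (1 - p)) + 2 * (p * q - p) / 3))) := by
    rw [hThi]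
    apply le_min
    · calc _ ≤ Real.exp (-(Real.log q * (q*(k:ℝ)*p))) * (1-p+p*Real.exp (Real.log q))^k :=
          tail_upper k p (q*(k:ℝ)*p) (Real.log q) hp0.le hp1 (Real.log_nonneg hq.le)
        _ ≤ _ := U1 k p q hp0 hp1 hq
    · by_cases hp1' : p < 1
      · have hl0 : 0 ≤ (p*q-p)/(p*(1-p)+(p*q-p)/3) := by
          apply div_nonneg
          · nlinarith
          · nlinarith
        calc _ ≤ Real.exp (-(((p*q-p)/(p*(1-p)+(p*q-p)/3))*(q*(k:ℝ)*p))) *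
              (1-p+p*Real.exp ((p*q-p)/(p*(1-p)+(p*q-p)/3)))^k :=
            tail_upper k p (q*(k:ℝ)*p) _ hp0.le hp1 hl0
          _ ≤ _ := U2 k p q hp0 hp1' hq
      · have hp1'' : p = 1 := le_antisymm hp1 (not_lt.1 hp1')
        have hzero : (∑ i ∈ Finset.range (k+1),
            (if q*(k:ℝ)*p < (i:ℝ) then (k.choose i : ℝ) * p^i * (1-p)^(k-i) else 0)) = 0 := by
          apply Finset.sum_eq_zero
          intro i hi
          rw [Finset.mem_range] at hi
          have hile : (i:ℝ) ≤ (k:ℝ) := by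
            have hik : i ≤ k := by omega
            exact_mod_cast hik
          have hnc : ¬ (q*(k:ℝ)*p < (i:ℝ)) := by
            rw [hp1'']
            push_neg
            nlinarith
          rw [if_neg hnc]
        rw [hzero]
        positivity
  have hTlo_bound : Tlo ≤ min ((Real.exp (1 / q - 1) * q ^ (1 / q)) ^ (p * k))
      (Real.exp (-(k * (p - p / q) ^ 2) / (2 * (p * (1 - p)) + 2 * (p - p / q) / 3))) := by
    rw [hTlo]
    apply le_min
    · calc _ ≤ Real.exp (Real.log q * ((k:ℝ)*p/q)) * (1-p+p*Real.exp (-Real.log q))^k :=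
          tail_lower k p ((k:ℝ)*p/q) (Real.log q) hp0.le hp1 (Real.log_nonneg hq.le)
        _ ≤ _ := L1 k p q hp0 hp1 hq
    · by_cases hp1' : p < 1
      · have htpos : 0 < p - p/q := by
          have hd : p/q < p := by rw [div_lt_iff₀ hq0]; nlinarith
          linarith
        have hl0 : 0 ≤ (p-p/q)/(p*(1-p)+(p-p/q)/3) := by
          apply div_nonneg htpos.le
          nlinarith
        calc _ ≤ Real.exp (((p-p/q)/(p*(1-p)+(p-p/q)/3))*((k:ℝ)*p/q)) *
              (1-p+p*Real.exp (-((p-p/q)/(p*(1-p)+(p-p/q)/3))))^k :=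
            tail_lower k p ((k:ℝ)*p/q) _ hp0.le hp1 hl0
          _ ≤ _ := L2 k p q hp0 hp1' hq
      · have hp1'' : p = 1 := le_antisymm hp1 (not_lt.1 hp1')
        have hzero : (∑ i ∈ Finset.range (k+1),
            (if (i:ℝ) < (k:ℝ)*p/q then (k.choose i : ℝ) * p^i * (1-p)^(k-i) else 0)) = 0 := by
          apply Finset.sum_eq_zero
          intro i hi
          split
          · rename_i hcond
            have hik : (i:ℝ) < (k:ℝ) := by
              calc (i:ℝ) < (k:ℝ)*p/q := hcond
                _ = (k:ℝ)/q := by rw [hp1'']; ring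
                _ < (k:ℝ) := by
                  rw [div_lt_iff₀ hq0]; nlinarith
            have hikn : i < k := by exact_mod_cast hik
            rw [hp1'']
            have hki : k - i ≠ 0 := by omega
            simp [hki]
          · rfl
        rw [hzero]
        positivity
  linarith [hmain, hThi_bound, hTlo_bound]
end

section
/- Theorem 3 (sampling with replacement, combined Chernoff/Bernstein/Hoeffding): For every natural number k ≥ 1, real p ∈ (0,1], and real q > 1, a binomial B(k,p) random variable X̂ satisfies P(k·p/q ≤ X̂ ≤ q·k·p) ≥ 1 − Ω − Ψ, where σ² = p(1−p), Ω = min( (e^{q−1}/q^q)^{p·k} , exp(−k·(pq−p)²/(2σ² + 2(pq−p)/3)) , exp(−2p²(q−1)²k) ); and Ψ = min( (e^{1/q−1}·q^{1/q})^{p·k} , exp(−k·(p−p/q)²/(2σ² + 2(p−p/q)/3)) , exp(−2k(pq−1)²/q²) ) if p·q > 1, while Ψ = min( (e^{1/q−1}·q^{1/q})^{p·k} , exp(−k·(p−p/q)²/(2σ² + 2(p−p/q)/3)) ) if p·q ≤ 1. -/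
set_option maxHeartbeats 1000000

section Aux

set_option maxHeartbeats 1000000

open Real

lemma S2 {x : ℝ} (hx : 0 ≤ x) : 1 + x + x^2/2 ≤ exp x := by
  have h := Real.sum_le_exp_of_nonneg hx 3
  simp [Finset.sum_range_succ, Nat.factorial] at h
  nlinarith [h]

lemma S3 {x : ℝ} (hx : 0 ≤ x) : exp (-x) ≤ 1 - x + x^2/2 := by
  have h2 : 1 + x + x^2/2 ≤ exp x := S2 hx
  have hpos : (0:ℝ) < 1 + x + x^2/2 := by nlinarith
  rw [Real.exp_neg]
  have hq : (0:ℝ) < 1 - x + x^2/2 := by nlinarith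
  rw [inv_le_iff_one_le_mul₀ (exp_pos x)]
  nlinarith [mul_le_mul_of_nonneg_left h2 hq.le]

lemma exp_rpow' (t y : ℝ) : (exp t) ^ y = exp (y * t) := by
  rw [Real.rpow_def_of_pos (exp_pos t), Real.log_exp, mul_comm]

lemma S4 {y : ℝ} (hy0 : 0 ≤ y) (hy1 : y ≤ 1) (t : ℝ) :
    exp (y * t) ≤ 1 + y * (exp t - 1) := by
  have h := Real.geom_mean_le_arith_mean2_weighted (by linarith : (0:ℝ) ≤ 1 - y) hy0
    (le_of_lt one_pos) (exp_pos t).le (by ring)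
  rw [Real.one_rpow, exp_rpow'] at h
  nlinarith [h]

lemma nonneg_of_deriv_nonneg (f f' : ℝ → ℝ) (hf : ∀ x, HasDerivAt f (f' x) x) (h0 : f 0 = 0)
    (hd : ∀ x, 0 ≤ x → 0 ≤ f' x) {t : ℝ} (ht : 0 ≤ t) : 0 ≤ f t := by
  have hdiff : Differentiable ℝ f := fun x => (hf x).differentiableAt
  have hmono : MonotoneOn f (Set.Ici 0) := by
    apply monotoneOn_of_deriv_nonneg (convex_Ici 0) hdiff.continuous.continuousOn
      (hdiff.differentiableOn)
    intro x hx
    rw [interior_Ici] at hx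
    rw [(hf x).deriv]
    exact hd x (le_of_lt hx)
  have := hmono (Set.self_mem_Ici) (Set.mem_Ici.2 ht) ht
  linarith [h0 ▸ this]

lemma nonneg_of_deriv_nonpos (f f' : ℝ → ℝ) (hf : ∀ x, HasDerivAt f (f' x) x) (h0 : f 0 = 0)
    (hd : ∀ x, x ≤ 0 → f' x ≤ 0) {t : ℝ} (ht : t ≤ 0) : 0 ≤ f t := by
  have hdiff : Differentiable ℝ f := fun x => (hf x).differentiableAt
  have hmono : AntitoneOn f (Set.Iic 0) := by
    apply antitoneOn_of_deriv_nonpos (convex_Iic 0) hdiff.continuous.continuousOn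
      (hdiff.differentiableOn)
    intro x hx
    rw [interior_Iic] at hx
    rw [(hf x).deriv]
    exact hd x (le_of_lt hx)
  have := hmono (Set.mem_Iic.2 ht) (Set.self_mem_Iic) ht
  linarith [h0 ▸ this]

-- S5
lemma S5 {y : ℝ} (hy0 : 0 ≤ y) (hy1 : y ≤ 1) {t : ℝ} (ht : 0 ≤ t) :
    exp (y * t) - 1 - y * t ≤ y^2 * (exp t - 1 - t) := by
  set G : ℝ → ℝ := fun s => y^2 * (exp s - 1 - s) - (exp (y * s) - 1 - y * s) with hG
  set G' : ℝ → ℝ := fun s => y^2 * (exp s - 1) - (exp (y * s) * y - y) with hG'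
  have hder : ∀ x, HasDerivAt G (G' x) x := by
    intro x
    have h1 : HasDerivAt (fun s : ℝ => y * s) y x := by
      simpa using (hasDerivAt_id x).const_mul y
    have h2 : HasDerivAt (fun s : ℝ => exp (y * s)) (exp (y * x) * y) x := h1.exp
    have h3 : HasDerivAt (fun s : ℝ => exp s) (exp x) x := Real.hasDerivAt_exp x
    have := ((h3.sub_const 1).sub (hasDerivAt_id x)).const_mul (y^2)
    have h4 := ((h2.sub_const 1).sub h1)
    exact this.sub h4
  have h0 : G 0 = 0 := by simp [hG]
  have hnn : 0 ≤ G t := by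
    apply nonneg_of_deriv_nonneg G G' hder h0 _ ht
    intro x hx
    have h4 := S4 hy0 hy1 x
    have := mul_le_mul_of_nonneg_left h4 hy0
    simp only [hG']
    nlinarith
  simp only [hG] at hnn
  linarith

-- S8
lemma S8 {t : ℝ} (ht : 0 ≤ t) (ht3 : t < 3) :
    exp t - 1 - t ≤ t^2 / (2 * (1 - t/3)) := by
  have key : (exp t - 1 - t) * (1 - t/3) ≤ t^2/2 := by
    set h : ℝ → ℝ := fun s => s^2/2 - (exp s - 1 - s) * (1 - s/3) with hh
    set h1 : ℝ → ℝ := fun s => s - ((exp s - 1) * (1 - s/3) + (exp s - 1 - s) * (-(1/3))) with hh1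
    set h2 : ℝ → ℝ := fun s => 1 - ((exp s) * (1 - s/3) + (exp s - 1) * (-(1/3)) + ((exp s - 1) * (-(1/3)) + 0)) with hh2
    have hd1 : ∀ x, HasDerivAt h (h1 x) x := by
      intro x
      have he : HasDerivAt (fun s : ℝ => exp s) (exp x) x := Real.hasDerivAt_exp x
      have ha : HasDerivAt (fun s : ℝ => exp s - 1 - s) (exp x - 1) x := by
        exact (he.sub_const 1).sub (hasDerivAt_id x)
      have hb : HasDerivAt (fun s : ℝ => 1 - s/3) (-(1/3)) x := by
        simpa using ((hasDerivAt_id x).div_const 3).const_sub 1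
      have hsq : HasDerivAt (fun s : ℝ => s^2/2) x x := by
        simpa using ((hasDerivAt_pow 2 x).div_const 2)
      have := hsq.sub (ha.mul hb)
      exact this
    have hd2 : ∀ x, HasDerivAt h1 (h2 x) x := by
      intro x
      have he : HasDerivAt (fun s : ℝ => exp s) (exp x) x := Real.hasDerivAt_exp x
      have ha : HasDerivAt (fun s : ℝ => exp s - 1) (exp x) x := by
        simpa using he.sub_const 1
      have hb : HasDerivAt (fun s : ℝ => 1 - s/3) (-(1/3)) x := by
        simpa using ((hasDerivAt_id x).div_const 3).const_sub 1
      have hc : HasDerivAt (fun s : ℝ => exp s - 1 - s) (exp x - 1) x := by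
        exact (he.sub_const 1).sub (hasDerivAt_id x)
      have hcm : HasDerivAt (fun s : ℝ => (exp s - 1 - s) * (-(1/3)))
          ((exp x - 1) * (-(1/3)) + 0) x := by
        simpa using (hc.mul_const (-(1/3)))
      have := (hasDerivAt_id x).sub ((ha.mul hb).add hcm)
      exact this
    have h2nn : ∀ x, 0 ≤ x → 0 ≤ h2 x := by
      intro x hx
      have hle : 1 - x ≤ exp (-x) := by linarith [Real.add_one_le_exp (-x)]
      have : (1 - x) * exp x ≤ 1 := by
        calc (1 - x) * exp x ≤ exp (-x) * exp x :=
              mul_le_mul_of_nonneg_right hle (exp_pos x).le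
          _ = 1 := by rw [← Real.exp_add]; simp
      simp only [hh2]
      nlinarith
    have h1nn : ∀ x, 0 ≤ x → 0 ≤ h1 x := by
      intro x hx
      apply nonneg_of_deriv_nonneg h1 h2 hd2 _ h2nn hx
      simp [hh1]
    have hnn : 0 ≤ h t := by
      apply nonneg_of_deriv_nonneg h h1 hd1 _ h1nn ht
      simp [hh]
    simp only [hh] at hnn
    linarith
  have hpos : 0 < 2 * (1 - t/3) := by linarith
  rw [le_div_iff₀ hpos]
  nlinarith [key]

-- S9 (Hoeffding's lemma)
lemma S9 {p : ℝ} (hp0 : 0 < p) (hp1 : p ≤ 1) (t : ℝ) :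
    1 - p + p * exp t ≤ exp (p * t + t^2/8) := by
  have hD : ∀ s : ℝ, 0 < 1 - p + p * exp s := by
    intro s
    have := exp_pos s
    nlinarith
  set M : ℝ → ℝ := fun s => p * s + s^2/8 - Real.log (1 - p + p * exp s) with hM
  set N : ℝ → ℝ := fun s => p + s/4 - p * exp s / (1 - p + p * exp s) with hN
  set N' : ℝ → ℝ := fun s => 1/4 - ((p * exp s) * (1 - p + p * exp s) - (p * exp s) * (p * exp s)) / (1 - p + p * exp s)^2 with hN'
  have hDd : ∀ x, HasDerivAt (fun s : ℝ => 1 - p + p * exp s) (p * exp x) x := by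
    intro x
    simpa using ((Real.hasDerivAt_exp x).const_mul p).const_add (1 - p)
  have hMd : ∀ x, HasDerivAt M (N x) x := by
    intro x
    have hlog : HasDerivAt (fun s : ℝ => Real.log (1 - p + p * exp s))
        (p * exp x / (1 - p + p * exp x)) x := (hDd x).log (ne_of_gt (hD x))
    have hp' : HasDerivAt (fun s : ℝ => p * s) p x := by
      simpa using (hasDerivAt_id x).const_mul p
    have hsq : HasDerivAt (fun s : ℝ => s^2/8) (x/4) x := by
      have := (hasDerivAt_pow 2 x).div_const 8
      exact this.congr_deriv (by norm_num; ring)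
    exact (hp'.add hsq).sub hlog
  have hNd : ∀ x, HasDerivAt N (N' x) x := by
    intro x
    have hu : HasDerivAt (fun s : ℝ => p * exp s) (p * exp x) x :=
      (Real.hasDerivAt_exp x).const_mul p
    have hdiv := hu.div (hDd x) (ne_of_gt (hD x))
    have hc : HasDerivAt (fun s : ℝ => p + s/4) (1/4) x := by
      simpa using ((hasDerivAt_id x).div_const 4).const_add p
    have := hc.sub hdiv
    exact this
  have hN'nn : ∀ x, 0 ≤ N' x := by
    intro x
    have hE := exp_pos x
    have hDx := hD x
    simp only [hN']
    rw [sub_nonneg, div_le_iff₀ (by positivity)]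
    nlinarith [sq_nonneg (1 - p - p * exp x)]
  have hNmono : Monotone N := by
    apply monotone_of_deriv_nonneg (fun x => (hNd x).differentiableAt)
    intro x
    rw [(hNd x).deriv]
    exact hN'nn x
  have hN0 : N 0 = 0 := by
    simp [hN]
  have hM0 : M 0 = 0 := by
    simp only [hM]
    norm_num
  have hMnn : 0 ≤ M t := by
    rcases le_or_gt 0 t with ht | ht
    · apply nonneg_of_deriv_nonneg M N hMd hM0 _ ht
      intro x hx
      have := hNmono hx
      rw [hN0] at this; exact this
    · apply nonneg_of_deriv_nonpos M N hMd hM0 _ ht.le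
      intro x hx
      have := hNmono hx
      rw [hN0] at this; exact this
  simp only [hM] at hMnn
  have hlog : Real.log (1 - p + p * exp t) ≤ p * t + t^2/8 := by linarith
  calc 1 - p + p * exp t = exp (Real.log (1 - p + p * exp t)) := (Real.exp_log (hD t)).symm
    _ ≤ exp (p * t + t^2/8) := exp_le_exp.2 hlog

-- S6: Bennett for upper tail
lemma S6 {p t : ℝ} (hp0 : 0 ≤ p) (hp1 : p ≤ 1) (ht : 0 ≤ t) :
    1 - p + p * exp t ≤ exp (p * t + p * (1 - p) * (exp t - 1 - t)) := by
  have hφ : t^2/2 ≤ exp t - 1 - t := by nlinarith [S2 ht]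
  have h1 : exp (-(p*t)) ≤ 1 - p*t + (p*t)^2/2 := S3 (mul_nonneg hp0 ht)
  have h2 : exp ((1-p)*t) - 1 - (1-p)*t ≤ (1-p)^2 * (exp t - 1 - t) :=
    S5 (by linarith) (by linarith) ht
  have hB : (1-p) * (exp (-(p*t)) - 1) + p * (exp ((1-p)*t) - 1)
      ≤ p * (1-p) * (exp t - 1 - t) := by
    nlinarith [mul_le_mul_of_nonneg_left h1 (by linarith : (0:ℝ) ≤ 1-p),
      mul_le_mul_of_nonneg_left h2 hp0,
      mul_le_mul_of_nonneg_left hφ (mul_nonneg (mul_nonneg hp0 hp0) (by linarith : (0:ℝ) ≤ 1-p))]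
  have key : (1-p) * exp (-(p*t)) + p * exp ((1-p)*t)
      ≤ exp (p * (1-p) * (exp t - 1 - t)) := by
    calc (1-p) * exp (-(p*t)) + p * exp ((1-p)*t)
        = ((1-p) * (exp (-(p*t)) - 1) + p * (exp ((1-p)*t) - 1)) + 1 := by ring
      _ ≤ exp ((1-p) * (exp (-(p*t)) - 1) + p * (exp ((1-p)*t) - 1)) :=
          Real.add_one_le_exp _
      _ ≤ _ := exp_le_exp.2 hB
  have heq : 1 - p + p * exp t
      = exp (p*t) * ((1-p) * exp (-(p*t)) + p * exp ((1-p)*t)) := by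
    have e1 : exp (p*t) * exp (-(p*t)) = 1 := by rw [← exp_add]; simp
    have e2 : exp (p*t) * exp ((1-p)*t) = exp t := by
      rw [← exp_add]; ring_nf
    nlinarith [e1, e2]
  rw [heq, Real.exp_add]
  exact mul_le_mul_of_nonneg_left key (exp_pos _).le

-- S7: Bennett for lower tail (bound b = p)
lemma S7 {p t : ℝ} (hp0 : 0 < p) (hp1 : p ≤ 1) (ht : 0 ≤ t) :
    1 - p + p * exp (-t) ≤ exp (-(p*t) + (1-p)/p * (exp (p*t) - 1 - p*t)) := by
  have hφp : (p*t)^2/2 ≤ exp (p*t) - 1 - p*t := by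
    nlinarith [S2 (mul_nonneg hp0.le ht)]
  have h2 : exp (-((1-p)*t)) ≤ 1 - (1-p)*t + ((1-p)*t)^2/2 :=
    S3 (mul_nonneg (by linarith) ht)
  have key2 : p * ((1-p) * (exp (p*t) - 1) + p * (exp (-((1-p)*t)) - 1))
      ≤ (1-p) * (exp (p*t) - 1 - p*t) := by
    nlinarith [mul_le_mul_of_nonneg_left h2 (mul_nonneg hp0.le hp0.le),
      mul_le_mul_of_nonneg_left hφp (sq_nonneg (1-p))]
  have hB : (1-p) * (exp (p*t) - 1) + p * (exp (-((1-p)*t)) - 1)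
      ≤ (1-p)/p * (exp (p*t) - 1 - p*t) := by
    rw [div_mul_eq_mul_div, le_div_iff₀ hp0]
    calc ((1-p) * (exp (p*t) - 1) + p * (exp (-((1-p)*t)) - 1)) * p
        = p * ((1-p) * (exp (p*t) - 1) + p * (exp (-((1-p)*t)) - 1)) := by ring
      _ ≤ _ := key2
  have key : (1-p) * exp (p*t) + p * exp (-((1-p)*t))
      ≤ exp ((1-p)/p * (exp (p*t) - 1 - p*t)) := by
    calc (1-p) * exp (p*t) + p * exp (-((1-p)*t))
        = ((1-p) * (exp (p*t) - 1) + p * (exp (-((1-p)*t)) - 1)) + 1 := by ring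
      _ ≤ exp ((1-p) * (exp (p*t) - 1) + p * (exp (-((1-p)*t)) - 1)) :=
          Real.add_one_le_exp _
      _ ≤ _ := exp_le_exp.2 hB
  have heq : 1 - p + p * exp (-t)
      = exp (-(p*t)) * ((1-p) * exp (p*t) + p * exp (-((1-p)*t))) := by
    have e1 : exp (-(p*t)) * exp (p*t) = 1 := by rw [← exp_add]; simp
    have e2 : exp (-(p*t)) * exp (-((1-p)*t)) = exp (-t) := by
      rw [← exp_add]; ring_nf
    nlinarith [e1, e2]
  rw [heq, Real.exp_add]
  exact mul_le_mul_of_nonneg_left key (exp_pos _).le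

lemma mgf_sum (k : ℕ) (p s : ℝ) :
    ∑ i ∈ Finset.range (k+1), (k.choose i : ℝ) * p^i * (1-p)^(k-i) * s^i
      = (p * s + (1-p))^k := by
  rw [add_pow]
  apply Finset.sum_congr rfl
  intro i _
  rw [mul_pow]
  ring

lemma up_bound (k : ℕ) (p q c t : ℝ) (hp0 : 0 ≤ p) (hp1 : p ≤ 1) (ht : 0 ≤ t)
    (hper : exp (-(t*(q*p))) * (p * exp t + (1 - p)) ≤ exp c) :
    (∑ i ∈ Finset.range (k+1),
      if q*(k:ℝ)*p < (i:ℝ) then (k.choose i : ℝ) * p^i * (1-p)^(k-i) else 0)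
      ≤ exp ((k:ℝ) * c) := by
  have h1p : (0:ℝ) ≤ 1 - p := by linarith
  calc (∑ i ∈ Finset.range (k+1),
      if q*(k:ℝ)*p < (i:ℝ) then (k.choose i : ℝ) * p^i * (1-p)^(k-i) else 0)
      ≤ ∑ i ∈ Finset.range (k+1),
        exp (-(t*(q*(k:ℝ)*p))) * ((k.choose i : ℝ) * p^i * (1-p)^(k-i) * (exp t)^i) := by
        apply Finset.sum_le_sum
        intro i _
        have hf : (0:ℝ) ≤ (k.choose i : ℝ) * p^i * (1-p)^(k-i) := by positivity
        split_ifs with h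
        · have h1 : (1:ℝ) ≤ exp (-(t*(q*(k:ℝ)*p))) * (exp t)^i := by
            rw [← Real.exp_nat_mul, ← Real.exp_add]
            apply Real.one_le_exp
            nlinarith [mul_nonneg ht (by linarith : (0:ℝ) ≤ (i:ℝ) - q*(k:ℝ)*p)]
          calc (k.choose i : ℝ) * p^i * (1-p)^(k-i)
              = ((k.choose i : ℝ) * p^i * (1-p)^(k-i)) * 1 := by ring
            _ ≤ ((k.choose i : ℝ) * p^i * (1-p)^(k-i)) *
                (exp (-(t*(q*(k:ℝ)*p))) * (exp t)^i) := by
                exact mul_le_mul_of_nonneg_left h1 hf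
            _ = exp (-(t*(q*(k:ℝ)*p))) * ((k.choose i : ℝ) * p^i * (1-p)^(k-i) * (exp t)^i) := by
                ring
        · positivity
    _ = exp (-(t*(q*(k:ℝ)*p))) * (p * exp t + (1-p))^k := by
        rw [← Finset.mul_sum, mgf_sum]
    _ = (exp (-(t*(q*p))) * (p * exp t + (1-p)))^k := by
        rw [mul_pow, ← Real.exp_nat_mul]
        congr 2
        ring
    _ ≤ (exp c)^k := by
        apply pow_le_pow_left₀ (by positivity) hper
    _ = exp ((k:ℝ) * c) := (Real.exp_nat_mul c k).symm

lemma lo_bound (k : ℕ) (p a c t : ℝ) (hp0 : 0 ≤ p) (hp1 : p ≤ 1) (ht : 0 ≤ t)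
    (hper : exp (t*a) * (p * exp (-t) + (1 - p)) ≤ exp c) :
    (∑ i ∈ Finset.range (k+1),
      if (i:ℝ) < (k:ℝ)*a then (k.choose i : ℝ) * p^i * (1-p)^(k-i) else 0)
      ≤ exp ((k:ℝ) * c) := by
  have h1p : (0:ℝ) ≤ 1 - p := by linarith
  calc (∑ i ∈ Finset.range (k+1),
      if (i:ℝ) < (k:ℝ)*a then (k.choose i : ℝ) * p^i * (1-p)^(k-i) else 0)
      ≤ ∑ i ∈ Finset.range (k+1),
        exp (t*((k:ℝ)*a)) * ((k.choose i : ℝ) * p^i * (1-p)^(k-i) * (exp (-t))^i) := by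
        apply Finset.sum_le_sum
        intro i _
        have hf : (0:ℝ) ≤ (k.choose i : ℝ) * p^i * (1-p)^(k-i) := by positivity
        split_ifs with h
        · have h1 : (1:ℝ) ≤ exp (t*((k:ℝ)*a)) * (exp (-t))^i := by
            rw [← Real.exp_nat_mul, ← Real.exp_add]
            apply Real.one_le_exp
            nlinarith [mul_nonneg ht (by linarith : (0:ℝ) ≤ (k:ℝ)*a - (i:ℝ))]
          calc (k.choose i : ℝ) * p^i * (1-p)^(k-i)
              = ((k.choose i : ℝ) * p^i * (1-p)^(k-i)) * 1 := by ring
            _ ≤ ((k.choose i : ℝ) * p^i * (1-p)^(k-i)) *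
                (exp (t*((k:ℝ)*a)) * (exp (-t))^i) := by
                exact mul_le_mul_of_nonneg_left h1 hf
            _ = exp (t*((k:ℝ)*a)) * ((k.choose i : ℝ) * p^i * (1-p)^(k-i) * (exp (-t))^i) := by
                ring
        · positivity
    _ = exp (t*((k:ℝ)*a)) * (p * exp (-t) + (1-p))^k := by
        rw [← Finset.mul_sum, mgf_sum]
    _ = (exp (t*a) * (p * exp (-t) + (1-p)))^k := by
        rw [mul_pow, ← Real.exp_nat_mul]
        congr 2
        ring
    _ ≤ (exp c)^k := by
        apply pow_le_pow_left₀ (by positivity) hper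
    _ = exp ((k:ℝ) * c) := (Real.exp_nat_mul c k).symm

section Bounds
variable {k : ℕ} {p q : ℝ}

lemma BU1 (hp0 : 0 < p) (hp1 : p ≤ 1) (hq : 1 < q) :
    (∑ i ∈ Finset.range (k+1),
      if q*(k:ℝ)*p < (i:ℝ) then (k.choose i : ℝ) * p^i * (1-p)^(k-i) else 0)
      ≤ (exp (q-1) / q ^ q) ^ (p*(k:ℝ)) := by
  have hq0 : (0:ℝ) < q := lt_trans one_pos hq
  have ht : 0 ≤ Real.log q := Real.log_nonneg hq.le
  have hper : exp (-(Real.log q*(q*p))) * (p * exp (Real.log q) + (1 - p))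
      ≤ exp ((q-1-Real.log q*q)*p) := by
    rw [Real.exp_log hq0]
    have h1 : p*q + (1-p) ≤ exp (p*(q-1)) := by
      have := Real.add_one_le_exp (p*(q-1)); linarith
    calc exp (-(Real.log q*(q*p))) * (p*q + (1-p))
        ≤ exp (-(Real.log q*(q*p))) * exp (p*(q-1)) :=
          mul_le_mul_of_nonneg_left h1 (exp_pos _).le
      _ = exp (-(Real.log q*(q*p)) + p*(q-1)) := (Real.exp_add _ _).symm
      _ = exp ((q-1-Real.log q*q)*p) := by ring_nf
  have h := up_bound k p q _ _ hp0.le hp1 ht hper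
  have hrw : (exp (q-1) / q ^ q) ^ (p*(k:ℝ)) = exp ((k:ℝ)*((q-1-Real.log q*q)*p)) := by
    rw [Real.rpow_def_of_pos hq0 q, ← Real.exp_sub, exp_rpow']
    congr 1
    ring
  rw [hrw]
  exact h

lemma BU2 (hp0 : 0 < p) (hp1 : p < 1) (hq : 1 < q) :
    (∑ i ∈ Finset.range (k+1),
      if q*(k:ℝ)*p < (i:ℝ) then (k.choose i : ℝ) * p^i * (1-p)^(k-i) else 0)
      ≤ exp (-((k:ℝ) * (p*q-p)^2) / (2*(p*(1-p)) + 2*(p*q-p)/3)) := by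
  have hδ : 0 < p*q - p := by nlinarith
  have hσ : 0 < p*(1-p) := by nlinarith
  have hden : 0 < p*(1-p) + (p*q-p)/3 := by linarith
  obtain ⟨t, hT, ht0, ht3⟩ :
      ∃ t : ℝ, t*(p*(1-p)+(p*q-p)/3) = p*q-p ∧ 0 ≤ t ∧ t < 3 := by
    refine ⟨(p*q-p)/(p*(1-p)+(p*q-p)/3), div_mul_cancel₀ _ hden.ne', le_of_lt (div_pos hδ hden), ?_⟩
    rw [div_lt_iff₀ hden]; nlinarith
  have h13 : 0 < 1 - t/3 := by linarith
  have hφ : exp t - 1 - t ≤ t^2/(2*(1-t/3)) := S8 ht0 ht3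
  have e1 : (1-t/3)*(p*(1-p)+(p*q-p)/3) = p*(1-p) := by
    linear_combination (-(1:ℝ)/3)*hT
  have e2 : p*(1-p)*(t^2/(2*(1-t/3))) = t*(p*q-p)/2 := by
    rw [← mul_div_assoc, div_eq_iff (by positivity : (2*(1-t/3)) ≠ 0)]
    linear_combination (-(t^2))*e1 + (t*(1-t/3))*hT
  have e3 : t*(p*q-p)/2 = (p*q-p)^2/(2*(p*(1-p))+2*(p*q-p)/3) := by
    rw [div_eq_div_iff (by norm_num : (2:ℝ) ≠ 0) (by positivity : (2*(p*(1-p))+2*(p*q-p)/3) ≠ 0)]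
    linear_combination (2*(p*q-p))*hT
  set c := -((p*q-p)^2/(2*(p*(1-p)) + 2*(p*q-p)/3)) with hcdef
  have hper : exp (-(t*(q*p))) * (p * exp t + (1 - p)) ≤ exp c := by
    have hS6 : p * exp t + (1-p) ≤ exp (p*t + p*(1-p)*(exp t - 1 - t)) := by
      have := S6 hp0.le hp1.le ht0; linarith
    calc exp (-(t*(q*p))) * (p * exp t + (1-p))
        ≤ exp (-(t*(q*p))) * exp (p*t + p*(1-p)*(exp t - 1 - t)) :=
          mul_le_mul_of_nonneg_left hS6 (exp_pos _).le
      _ = exp (-(t*(q*p)) + (p*t + p*(1-p)*(exp t - 1 - t))) := (Real.exp_add _ _).symm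
      _ ≤ exp c := by
          apply Real.exp_le_exp.2
          have h2 : p*(1-p)*(exp t - 1 - t) ≤ p*(1-p)*(t^2/(2*(1-t/3))) :=
            mul_le_mul_of_nonneg_left hφ hσ.le
          rw [hcdef]
          nlinarith [h2, e2, e3]
  have h := up_bound k p q c t hp0.le hp1.le ht0 hper
  have hfin : exp ((k:ℝ)*c) = exp (-((k:ℝ) * (p*q-p)^2) / (2*(p*(1-p)) + 2*(p*q-p)/3)) := by
    rw [hcdef]; congr 1; ring
  rw [← hfin]
  exact h

lemma BU3 (hp0 : 0 < p) (hp1 : p ≤ 1) (hq : 1 < q) :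
    (∑ i ∈ Finset.range (k+1),
      if q*(k:ℝ)*p < (i:ℝ) then (k.choose i : ℝ) * p^i * (1-p)^(k-i) else 0)
      ≤ exp (-2 * p^2 * (q-1)^2 * (k:ℝ)) := by
  set t := 4*(p*q-p) with htdef
  have hδ : 0 < p*q - p := by nlinarith
  have ht0 : 0 ≤ t := by rw [htdef]; linarith
  set c := -(2*(p*q-p)^2) with hcdef
  have hper : exp (-(t*(q*p))) * (p * exp t + (1 - p)) ≤ exp c := by
    have hS9 : p * exp t + (1-p) ≤ exp (p*t + t^2/8) := by
      have := S9 hp0 hp1 t; linarith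
    calc exp (-(t*(q*p))) * (p * exp t + (1-p))
        ≤ exp (-(t*(q*p))) * exp (p*t + t^2/8) :=
          mul_le_mul_of_nonneg_left hS9 (exp_pos _).le
      _ = exp (-(t*(q*p)) + (p*t + t^2/8)) := (Real.exp_add _ _).symm
      _ = exp c := by rw [hcdef, htdef]; congr 1; ring
  have h := up_bound k p q c t hp0.le hp1 ht0 hper
  have : exp ((k:ℝ)*c) = exp (-2 * p^2 * (q-1)^2 * (k:ℝ)) := by
    rw [hcdef]; congr 1; ring
  rw [← this]
  exact h

lemma BL1 (hp0 : 0 < p) (hp1 : p ≤ 1) (hq : 1 < q) :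
    (∑ i ∈ Finset.range (k+1),
      if (i:ℝ) < (k:ℝ)*(p/q) then (k.choose i : ℝ) * p^i * (1-p)^(k-i) else 0)
      ≤ (exp (1/q-1) * q ^ (1/q)) ^ (p*(k:ℝ)) := by
  have hq0 : (0:ℝ) < q := lt_trans one_pos hq
  have ht : 0 ≤ Real.log q := Real.log_nonneg hq.le
  have hper : exp (Real.log q*(p/q)) * (p * exp (-Real.log q) + (1 - p))
      ≤ exp (Real.log q*(p/q) + p*(1/q-1)) := by
    have hexp : exp (-Real.log q) = 1/q := by
      rw [Real.exp_neg, Real.exp_log hq0, one_div]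
    rw [hexp]
    have h1 : p*(1/q) + (1-p) ≤ exp (p*(1/q-1)) := by
      have := Real.add_one_le_exp (p*(1/q-1)); linarith
    calc exp (Real.log q*(p/q)) * (p*(1/q) + (1-p))
        ≤ exp (Real.log q*(p/q)) * exp (p*(1/q-1)) :=
          mul_le_mul_of_nonneg_left h1 (exp_pos _).le
      _ = exp (Real.log q*(p/q) + p*(1/q-1)) := (Real.exp_add _ _).symm
  have h := lo_bound k p (p/q) _ _ hp0.le hp1 ht hper
  have hrw : (exp (1/q-1) * q ^ (1/q)) ^ (p*(k:ℝ))
      = exp ((k:ℝ)*(Real.log q*(p/q) + p*(1/q-1))) := by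
    rw [Real.rpow_def_of_pos hq0 (1/q), ← Real.exp_add, exp_rpow']
    congr 1
    ring
  rw [hrw]
  exact h

lemma BL2 (hp0 : 0 < p) (hp1 : p < 1) (hq : 1 < q) :
    (∑ i ∈ Finset.range (k+1),
      if (i:ℝ) < (k:ℝ)*(p/q) then (k.choose i : ℝ) * p^i * (1-p)^(k-i) else 0)
      ≤ exp (-((k:ℝ) * (p-p/q)^2) / (2*(p*(1-p)) + 2*(p-p/q)/3)) := by
  have hq0 : (0:ℝ) < q := lt_trans one_pos hq
  have hδ : 0 < p - p/q := by
    have : p/q < p := div_lt_self hp0 hq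
    linarith
  have hσ : 0 < p*(1-p) := by nlinarith
  have hden : 0 < p*(1-p) + p*(p-p/q)/3 := by positivity
  obtain ⟨t, hT, ht0, hpt3⟩ :
      ∃ t : ℝ, t*(p*(1-p)+p*(p-p/q)/3) = p-p/q ∧ 0 ≤ t ∧ p*t < 3 := by
    refine ⟨(p-p/q)/(p*(1-p)+p*(p-p/q)/3), div_mul_cancel₀ _ hden.ne',
      le_of_lt (div_pos hδ hden), ?_⟩
    rw [mul_div_assoc', div_lt_iff₀ hden]; nlinarith
  have hpt0 : 0 ≤ p*t := mul_nonneg hp0.le ht0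
  have h13 : 0 < 1 - p*t/3 := by linarith
  have hφ : exp (p*t) - 1 - p*t ≤ (p*t)^2/(2*(1-(p*t)/3)) := S8 hpt0 hpt3
  have e1 : (1-p*t/3)*(p*(1-p)+p*(p-p/q)/3) = p*(1-p) := by
    linear_combination (-(p:ℝ)/3)*hT
  have e2 : (1-p)/p*((p*t)^2/(2*(1-(p*t)/3))) = t*(p-p/q)/2 := by
    rw [div_mul_div_comm, div_eq_iff (ne_of_gt (by nlinarith [mul_pos hp0 h13] : (0:ℝ) < p*(2*(1-(p*t)/3))))]
    linear_combination (-(p*t^2))*e1 + (p*t*(1-p*t/3))*hT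
  have e3 : t*(p-p/q)/2 = (p-p/q)^2/(2*(p*(1-p))+2*p*(p-p/q)/3) := by
    rw [div_eq_div_iff (by norm_num : (2:ℝ) ≠ 0)
      (ne_of_gt (by nlinarith : (0:ℝ) < 2*(p*(1-p))+2*p*(p-p/q)/3))]
    linear_combination (2*(p-p/q))*hT
  set c := -((p-p/q)^2/(2*(p*(1-p)) + 2*(p-p/q)/3)) with hcdef
  have hper : exp (t*(p/q)) * (p * exp (-t) + (1 - p)) ≤ exp c := by
    have hS7 : p * exp (-t) + (1-p)
        ≤ exp (-(p*t) + (1-p)/p*(exp (p*t) - 1 - p*t)) := by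
      have := S7 hp0 hp1.le ht0; linarith
    calc exp (t*(p/q)) * (p * exp (-t) + (1-p))
        ≤ exp (t*(p/q)) * exp (-(p*t) + (1-p)/p*(exp (p*t) - 1 - p*t)) :=
          mul_le_mul_of_nonneg_left hS7 (exp_pos _).le
      _ = exp (t*(p/q) + (-(p*t) + (1-p)/p*(exp (p*t) - 1 - p*t))) := (Real.exp_add _ _).symm
      _ ≤ exp c := by
          apply Real.exp_le_exp.2
          have hcoef : (0:ℝ) ≤ (1-p)/p := div_nonneg (by linarith) hp0.le
          have h2 : (1-p)/p*(exp (p*t) - 1 - p*t) ≤ (1-p)/p*((p*t)^2/(2*(1-(p*t)/3))) :=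
            mul_le_mul_of_nonneg_left hφ hcoef
          have hmono : (p-p/q)^2/(2*(p*(1-p))+2*(p-p/q)/3)
              ≤ (p-p/q)^2/(2*(p*(1-p))+2*p*(p-p/q)/3) := by
            rw [div_le_div_iff₀ (by nlinarith) (by nlinarith)]
            nlinarith [mul_pos hδ (mul_pos hδ hδ), sq_nonneg (p-p/q)]
          rw [hcdef]
          nlinarith [h2, e2, e3]
  have h := lo_bound k p (p/q) c t hp0.le hp1.le ht0 hper
  have hfin : exp ((k:ℝ)*c) = exp (-((k:ℝ) * (p-p/q)^2) / (2*(p*(1-p)) + 2*(p-p/q)/3)) := by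
    rw [hcdef]; congr 1; ring
  rw [← hfin]
  exact h

lemma BL3 (hp0 : 0 < p) (hp1 : p ≤ 1) (hq : 1 < q) (hpq : 1 < p*q) :
    (∑ i ∈ Finset.range (k+1),
      if (i:ℝ) < (k:ℝ)*(p/q) then (k.choose i : ℝ) * p^i * (1-p)^(k-i) else 0)
      ≤ exp (-(2*(k:ℝ)*(p*q-1)^2) / q^2) := by
  have hq0 : (0:ℝ) < q := lt_trans one_pos hq
  have hδ : 0 < p - p/q := by
    have : p/q < p := div_lt_self hp0 hq
    linarith
  set t := 4*(p-p/q) with htdef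
  have ht0 : 0 ≤ t := by rw [htdef]; linarith
  set c := -(2*(p-1/q)^2) with hcdef
  have hper : exp (t*(p/q)) * (p * exp (-t) + (1 - p)) ≤ exp c := by
    have hS9 : p * exp (-t) + (1-p) ≤ exp (-(p*t) + t^2/8) := by
      have := S9 hp0 hp1 (-t)
      have he : p*(-t) + (-t)^2/8 = -(p*t) + t^2/8 := by ring
      rw [he] at this
      linarith
    calc exp (t*(p/q)) * (p * exp (-t) + (1-p))
        ≤ exp (t*(p/q)) * exp (-(p*t) + t^2/8) :=
          mul_le_mul_of_nonneg_left hS9 (exp_pos _).le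
      _ = exp (t*(p/q) + (-(p*t) + t^2/8)) := (Real.exp_add _ _).symm
      _ ≤ exp c := by
          apply Real.exp_le_exp.2
          have he2 : t*(p/q) + (-(p*t) + t^2/8) = -(2*(p-p/q)^2) := by
            rw [htdef]; ring
          have hle : 0 ≤ p - 1/q := by
            rw [sub_nonneg, div_le_iff₀ hq0]; linarith
          have hle2 : p - 1/q ≤ p - p/q := by
            have : p/q ≤ 1/q := by gcongr
            linarith [this]
          rw [hcdef, he2]
          nlinarith
  have h := lo_bound k p (p/q) c t hp0.le hp1 ht0 hper
  have : exp ((k:ℝ)*c) = exp (-(2*(k:ℝ)*(p*q-1)^2) / q^2) := by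
    rw [hcdef]; congr 1
    field_simp
  rw [← this]
  exact h

end Bounds

end Aux


open Classical in
theorem qerror_bound_with_replacement_full (k : ℕ) (hk : 1 ≤ k) (p : ℝ)
    (hp0 : 0 < p) (hp1 : p ≤ 1) (q : ℝ) (hq : 1 < q) :
    1 - min (min ((Real.exp (q - 1) / q ^ q) ^ (p * k))
              (Real.exp (-(k * (p * q - p) ^ 2) / (2 * (p * (1 - p)) + 2 * (p * q - p) / 3))))
          (Real.exp (-2 * p ^ 2 * (q - 1) ^ 2 * k))
      - (if 1 < p * q then
            min (min ((Real.exp (1 / q - 1) * q ^ (1 / q)) ^ (p * k))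
                  (Real.exp (-(k * (p - p / q) ^ 2) / (2 * (p * (1 - p)) + 2 * (p - p / q) / 3))))
              (Real.exp (-(2 * k * (p * q - 1) ^ 2) / q ^ 2))
          else
            min ((Real.exp (1 / q - 1) * q ^ (1 / q)) ^ (p * k))
              (Real.exp (-(k * (p - p / q) ^ 2) / (2 * (p * (1 - p)) + 2 * (p - p / q) / 3)))) ≤
    binomProb k p (fun i => k * p / q ≤ (i : ℝ) ∧ (i : ℝ) ≤ q * k * p) := by
  have hq0 : (0:ℝ) < q := lt_trans one_pos hq
  have hk1 : (1:ℝ) ≤ (k:ℝ) := by exact_mod_cast hk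
  -- upper tail
  have hTup : (∑ i ∈ Finset.range (k+1),
      if q*(k:ℝ)*p < (i:ℝ) then (k.choose i : ℝ) * p^i * (1-p)^(k-i) else 0)
      ≤ min (min ((Real.exp (q - 1) / q ^ q) ^ (p * (k:ℝ)))
          (Real.exp (-((k:ℝ) * (p * q - p) ^ 2) / (2 * (p * (1 - p)) + 2 * (p * q - p) / 3))))
          (Real.exp (-2 * p ^ 2 * (q - 1) ^ 2 * (k:ℝ))) := by
    rcases lt_or_eq_of_le hp1 with hp1' | hp1'
    · exact le_min (le_min (BU1 hp0 hp1 hq) (BU2 hp0 hp1' hq)) (BU3 hp0 hp1 hq)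
    · have hz : (∑ i ∈ Finset.range (k+1),
          if q*(k:ℝ)*p < (i:ℝ) then (k.choose i : ℝ) * p^i * (1-p)^(k-i) else 0) = 0 := by
        apply Finset.sum_eq_zero
        intro i hi
        rw [if_neg]
        have hik : (i:ℝ) ≤ (k:ℝ) := by
          have := Finset.mem_range.mp hi
          exact_mod_cast Nat.lt_succ_iff.mp this
        rw [hp1', not_lt]
        nlinarith
      rw [hz]
      refine le_min (le_min ?_ ?_) ?_
      · exact Real.rpow_nonneg (div_nonneg (Real.exp_pos _).le (Real.rpow_nonneg hq0.le _)) _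
      · exact (Real.exp_pos _).le
      · exact (Real.exp_pos _).le
  -- lower tail
  have hTlo : (∑ i ∈ Finset.range (k+1),
      if (i:ℝ) < (k:ℝ)*(p/q) then (k.choose i : ℝ) * p^i * (1-p)^(k-i) else 0)
      ≤ (if 1 < p * q then
            min (min ((Real.exp (1 / q - 1) * q ^ (1 / q)) ^ (p * (k:ℝ)))
                  (Real.exp (-((k:ℝ) * (p - p / q) ^ 2) / (2 * (p * (1 - p)) + 2 * (p - p / q) / 3))))
              (Real.exp (-(2 * (k:ℝ) * (p * q - 1) ^ 2) / q ^ 2))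
          else
            min ((Real.exp (1 / q - 1) * q ^ (1 / q)) ^ (p * (k:ℝ)))
              (Real.exp (-((k:ℝ) * (p - p / q) ^ 2) / (2 * (p * (1 - p)) + 2 * (p - p / q) / 3)))) := by
    rcases lt_or_eq_of_le hp1 with hp1' | hp1'
    · split_ifs with hpq
      · exact le_min (le_min (BL1 hp0 hp1 hq) (BL2 hp0 hp1' hq)) (BL3 hp0 hp1 hq hpq)
      · exact le_min (BL1 hp0 hp1 hq) (BL2 hp0 hp1' hq)
    · have hz : (∑ i ∈ Finset.range (k+1),
          if (i:ℝ) < (k:ℝ)*(p/q) then (k.choose i : ℝ) * p^i * (1-p)^(k-i) else 0) = 0 := by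
        apply Finset.sum_eq_zero
        intro i hi
        by_cases hcond : (i:ℝ) < (k:ℝ)*(p/q)
        · rw [if_pos hcond]
          have hik : (i:ℝ) < (k:ℝ) := by
            apply lt_of_lt_of_le hcond
            have h1 : p/q ≤ 1 := by
              rw [div_le_one hq0]; linarith
            nlinarith
          have hikn : i < k := by exact_mod_cast hik
          have hkim : k - i ≠ 0 := by omega
          rw [hp1']
          simp [hkim]
        · rw [if_neg hcond]
      rw [hz]
      split_ifs
      · refine le_min (le_min ?_ ?_) ?_
        · exact Real.rpow_nonneg (mul_nonneg (Real.exp_pos _).le (Real.rpow_nonneg hq0.le _)) _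
        · exact (Real.exp_pos _).le
        · exact (Real.exp_pos _).le
      · refine le_min ?_ ?_
        · exact Real.rpow_nonneg (mul_nonneg (Real.exp_pos _).le (Real.rpow_nonneg hq0.le _)) _
        · exact (Real.exp_pos _).le
  -- splitting 1 into the three parts
  have hkey : (1:ℝ) ≤
      (∑ i ∈ Finset.range (k+1),
        if (i:ℝ) < (k:ℝ)*(p/q) then (k.choose i : ℝ) * p^i * (1-p)^(k-i) else 0)
      + ((binomProb k p (fun i => k * p / q ≤ (i : ℝ) ∧ (i : ℝ) ≤ q * k * p))
      + (∑ i ∈ Finset.range (k+1),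
        if q*(k:ℝ)*p < (i:ℝ) then (k.choose i : ℝ) * p^i * (1-p)^(k-i) else 0)) := by
    have hpoint : ∀ i ∈ Finset.range (k+1),
        (k.choose i : ℝ) * p^i * (1-p)^(k-i) ≤
        (if (i:ℝ) < (k:ℝ)*(p/q) then (k.choose i : ℝ) * p^i * (1-p)^(k-i) else 0)
        + ((if (k:ℝ) * p / q ≤ (i:ℝ) ∧ (i:ℝ) ≤ q * (k:ℝ) * p
              then (k.choose i : ℝ) * p^i * (1-p)^(k-i) else 0)
        + (if q*(k:ℝ)*p < (i:ℝ) then (k.choose i : ℝ) * p^i * (1-p)^(k-i) else 0)) := by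
      intro i _
      have hf : (0:ℝ) ≤ (k.choose i : ℝ) * p^i * (1-p)^(k-i) := by
        have h1p : (0:ℝ) ≤ 1 - p := by linarith
        positivity
      have hmd : (k:ℝ)*p/q = (k:ℝ)*(p/q) := mul_div_assoc _ _ _
      by_cases h1 : (k:ℝ)*p/q ≤ (i:ℝ)
      · by_cases h2 : (i:ℝ) ≤ q*(k:ℝ)*p
        · have e2 : (if (k:ℝ) * p / q ≤ (i:ℝ) ∧ (i:ℝ) ≤ q * (k:ℝ) * p
              then (k.choose i : ℝ) * p^i * (1-p)^(k-i) else 0)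
              = (k.choose i : ℝ) * p^i * (1-p)^(k-i) := if_pos ⟨h1, h2⟩
          rw [e2]
          split_ifs <;> linarith
        · have e3 : (if q*(k:ℝ)*p < (i:ℝ)
              then (k.choose i : ℝ) * p^i * (1-p)^(k-i) else 0)
              = (k.choose i : ℝ) * p^i * (1-p)^(k-i) := if_pos (not_le.mp h2)
          rw [e3]
          split_ifs <;> linarith
      · have hcond1 : (i:ℝ) < (k:ℝ)*(p/q) := by
          rw [← hmd]; exact not_le.mp h1
        have e1 : (if (i:ℝ) < (k:ℝ)*(p/q)
            then (k.choose i : ℝ) * p^i * (1-p)^(k-i) else 0)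
            = (k.choose i : ℝ) * p^i * (1-p)^(k-i) := if_pos hcond1
        rw [e1]
        split_ifs <;> linarith
    have hsum := Finset.sum_le_sum hpoint
    rw [Finset.sum_add_distrib, Finset.sum_add_distrib] at hsum
    have hone : (∑ i ∈ Finset.range (k+1), (k.choose i : ℝ) * p^i * (1-p)^(k-i)) = 1 := by
      calc (∑ i ∈ Finset.range (k+1), (k.choose i : ℝ) * p^i * (1-p)^(k-i))
          = ∑ i ∈ Finset.range (k+1), (k.choose i : ℝ) * p^i * (1-p)^(k-i) * 1^i := by
            simp
        _ = (p * 1 + (1-p))^k := mgf_sum k p 1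
        _ = 1 := by norm_num
    rw [hone] at hsum
    have hbp : binomProb k p (fun i => k * p / q ≤ (i : ℝ) ∧ (i : ℝ) ≤ q * k * p)
        = ∑ i ∈ Finset.range (k+1),
          if (k:ℝ) * p / q ≤ (i:ℝ) ∧ (i:ℝ) ≤ q * (k:ℝ) * p
            then (k.choose i : ℝ) * p^i * (1-p)^(k-i) else 0 := by
      unfold binomProb
      refine Finset.sum_congr rfl fun i _ => ?_
      by_cases h : (k:ℝ) * p / q ≤ (i:ℝ) ∧ (i:ℝ) ≤ q * (k:ℝ) * p
      · rw [if_pos h, if_pos h]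
      · rw [if_neg h, if_neg h]
    rw [hbp]
    linarith
  linarith [hTup, hTlo, hkey]
end

section
/- For every population of n ≥ 2 rows of which m satisfy a predicate (0 < m ≤ n, p = m/n), every sample size 1 ≤ k < n, and every real q ≥ 1, the hypergeometric random variable X̂ counting satisfying rows among k rows drawn uniformly without replacement satisfies P(X̂ > k·p·q) ≤ exp(−2k·(pq−p)²/ρ). (Hoeffding–Serfling bound for the over-estimation probability of sampling without replacement.) -/
open Classical in
/-- Probability that a hypergeometric random variable (number of "satisfying" rows among
`k` rows drawn uniformly at random without replacement from `n` rows of which `m` satisfy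
the predicate) satisfies `P`. -/
noncomputable def hyperProb (n m k : ℕ) (P : ℕ → Prop) : ℝ :=
  ∑ i ∈ Finset.range (k + 1),
    if P i then ((m.choose i : ℝ) * ((n - m).choose (k - i) : ℝ)) / (n.choose k : ℝ) else 0

open Classical in
/-- The factor ρ from the Hoeffding–Serfling/Bernstein–Serfling inequalities. -/
noncomputable def rho (n k : ℕ) : ℝ :=
  if (k : ℝ) ≤ (n : ℝ) / 2 then 1 - ((k : ℝ) - 1) / n
  else (1 - (k : ℝ) / n) * (1 + 1 / (k : ℝ))

open Classical in
/-- The factor ζ from the Bernstein–Serfling inequality. -/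
noncomputable def zeta (n k : ℕ) : ℝ :=
  if (k : ℝ) ≤ (n : ℝ) / 2 then
    4 / 3 + Real.sqrt ((k * ((k : ℝ) - 1)) / (n * ((n : ℝ) - k + 1)))
  else
    4 / 3 + Real.sqrt ((((n : ℝ) - k - 1) * ((n : ℝ) - k)) / (((k : ℝ) + 1) * n))

section HSAux

open Finset

lemma hs_hoeffding_core (θ : ℝ) (h0 : 0 ≤ θ) (h1 : θ ≤ 1) (t : ℝ) :
    1 - θ + θ * Real.exp t ≤ Real.exp (θ * t + t ^ 2 / 8) := by
  set D : ℝ → ℝ := fun t => 1 - θ + θ * Real.exp t with hDdef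
  have hD : ∀ s : ℝ, 0 < D s := by
    intro s
    rcases eq_or_lt_of_le h0 with h | h
    · simp [hDdef, ← h]
    · have h2 := Real.exp_pos s
      have h3 : 0 < θ * Real.exp s := by positivity
      simp only [hDdef]
      nlinarith
  have hDd : ∀ s : ℝ, HasDerivAt D (θ * Real.exp s) s := by
    intro s
    exact ((Real.hasDerivAt_exp s).const_mul θ).const_add (1 - θ)
  set g : ℝ → ℝ := fun t => θ * t + t ^ 2 / 8 - Real.log (D t) with hgdef
  set g' : ℝ → ℝ := fun t => θ + t / 4 - θ * Real.exp t / D t with hg'def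
  have hgd : ∀ s : ℝ, HasDerivAt g (g' s) s := by
    intro s
    have h1' : HasDerivAt (fun t : ℝ => θ * t + t ^ 2 / 8) (θ + 2 * s / 8) s := by
      have := ((hasDerivAt_pow 2 s).div_const 8).const_add (θ * s)
      have h2 : HasDerivAt (fun t : ℝ => θ * t) θ s := by
        simpa using (hasDerivAt_id s).const_mul θ
      exact (h2.add ((hasDerivAt_pow 2 s).div_const 8)).congr_deriv (by simp)
    have h2' : HasDerivAt (fun t : ℝ => Real.log (D t)) (θ * Real.exp s / D s) s :=
      (hDd s).log (ne_of_gt (hD s))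
    have := h1'.sub h2'
    exact this.congr_deriv (by simp only [hg'def]; ring)
  have hg'd : ∀ s : ℝ, HasDerivAt g' (1 / 4 - θ * Real.exp s * (1 - θ) / (D s) ^ 2) s := by
    intro s
    have hu : HasDerivAt (fun t : ℝ => θ * Real.exp t / D t)
        ((θ * Real.exp s * D s - θ * Real.exp s * (θ * Real.exp s)) / (D s) ^ 2) s :=
      ((Real.hasDerivAt_exp s).const_mul θ).div (hDd s) (ne_of_gt (hD s))
    have hl : HasDerivAt (fun t : ℝ => θ + t / 4) (1 / 4) s := by
      simpa using ((hasDerivAt_id s).div_const 4).const_add θ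
    have hkey : θ * Real.exp s * (1 - θ) = θ * Real.exp s * D s - θ * Real.exp s * (θ * Real.exp s) := by
      simp only [hDdef]; ring
    rw [hkey]
    exact hl.sub hu
  have hg'' : ∀ s : ℝ, 0 ≤ 1 / 4 - θ * Real.exp s * (1 - θ) / (D s) ^ 2 := by
    intro s
    have hDs := hD s
    have hDe : D s = (1 - θ) + θ * Real.exp s := rfl
    rw [sub_nonneg, div_le_iff₀ (by positivity)]
    nlinarith [sq_nonneg ((1 - θ) - θ * Real.exp s), Real.exp_pos s]
  have hg'mono : Monotone g' :=
    monotone_of_deriv_nonneg (fun s => (hg'd s).differentiableAt)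
      (fun s => by rw [(hg'd s).deriv]; exact hg'' s)
  have hg'0 : g' 0 = 0 := by simp [hg'def, hDdef]
  have hg0 : g 0 = 0 := by
    have : D 0 = 1 := by simp [hDdef]
    simp [hgdef, this]
  have hgt : 0 ≤ g t := by
    rcases le_total 0 t with h | h
    · have hmono := monotoneOn_of_deriv_nonneg (convex_Ici (0:ℝ))
        (fun s _ => (hgd s).differentiableAt.continuousAt.continuousWithinAt)
        (fun s _ => (hgd s).differentiableAt.differentiableWithinAt)
        (fun s hs => by
          rw [(hgd s).deriv, ← hg'0]
          exact hg'mono (le_of_lt (by simpa using hs)))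
      have := hmono Set.self_mem_Ici (Set.mem_Ici.mpr h) h
      rwa [hg0] at this
    · have hmono := antitoneOn_of_deriv_nonpos (convex_Iic (0:ℝ))
        (fun s _ => (hgd s).differentiableAt.continuousAt.continuousWithinAt)
        (fun s _ => (hgd s).differentiableAt.differentiableWithinAt)
        (fun s hs => by
          rw [(hgd s).deriv, ← hg'0]
          exact hg'mono (le_of_lt (by simpa using hs)))
      have := hmono (Set.mem_Iic.mpr h) Set.self_mem_Iic h
      rwa [hg0] at this
  have hlog : Real.log (D t) ≤ θ * t + t ^ 2 / 8 := by
    have : g t = θ * t + t ^ 2 / 8 - Real.log (D t) := rfl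
    linarith [hgt, this ▸ hgt]
  calc 1 - θ + θ * Real.exp t = D t := rfl
    _ ≤ Real.exp (θ * t + t ^ 2 / 8) := by
        rw [← Real.exp_log (hD t)]
        exact Real.exp_le_exp.mpr hlog

noncomputable def hsP (n m k i : ℕ) : ℝ :=
  ((m.choose i : ℝ) * ((n - m).choose (k - i) : ℝ)) / (n.choose k : ℝ)

noncomputable def hsF (n : ℕ) (j : ℕ) : ℝ :=
  ∑ t ∈ Finset.range j, (((n : ℝ) - (t + 1))⁻¹) ^ 2

lemma hsP_nonneg (n m k i : ℕ) : 0 ≤ hsP n m k i := by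
  unfold hsP; positivity

lemma hs_supp {n m k i : ℕ} (h : hsP n m k i ≠ 0) : i ≤ m ∧ k - i ≤ n - m := by
  constructor
  · by_contra hc
    exact h (by unfold hsP; rw [Nat.choose_eq_zero_of_lt (show m < i by omega)]; simp)
  · by_contra hc
    apply h
    unfold hsP
    rw [Nat.choose_eq_zero_of_lt (show n - m < k - i by omega)]
    simp

lemma hs_cast_choose (a s : ℕ) :
    (a.choose (s + 1) : ℝ) * (s + 1) = (a.choose s : ℝ) * ((a : ℝ) - s) := by
  rcases lt_or_ge s a with h | h
  · have h2 := Nat.choose_succ_right_eq a s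
    calc (a.choose (s + 1) : ℝ) * (s + 1) = ((a.choose (s + 1) * (s + 1) : ℕ) : ℝ) := by
          push_cast; ring
      _ = ((a.choose s * (a - s) : ℕ) : ℝ) := by rw [h2]
      _ = (a.choose s : ℝ) * ((a : ℝ) - s) := by push_cast [Nat.cast_sub h.le]; ring
  · rcases eq_or_lt_of_le h with rfl | h'
    · simp [Nat.choose_succ_self]
    · rw [Nat.choose_eq_zero_of_lt h', Nat.choose_eq_zero_of_lt (by omega)]; ring

lemma hs_frac1 (a c x N1 N2 nj jp : ℝ) (hN1 : N1 ≠ 0) (hN2 : N2 ≠ 0) (hnj : nj ≠ 0)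
    (hF3 : N2 * jp = N1 * nj) (hKey : a * jp = c * x) :
    a / N2 = c / N1 * (x / nj) := by
  rw [div_mul_div_comm, div_eq_div_iff hN2 (mul_ne_zero hN1 hnj)]
  linear_combination (-a) * hF3 + N2 * hKey

lemma hs_frac2 (a c x d y N1 N2 nj jp : ℝ) (hN1 : N1 ≠ 0) (hN2 : N2 ≠ 0) (hnj : nj ≠ 0)
    (hF3 : N2 * jp = N1 * nj) (hKey : a * jp = c * x + d * y) :
    a / N2 = c / N1 * (x / nj) + d / N1 * (y / nj) := by
  rw [div_mul_div_comm, div_mul_div_comm, ← add_div,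
    div_eq_div_iff hN2 (mul_ne_zero hN1 hnj)]
  linear_combination (-a) * hF3 + N2 * hKey

lemma hs_step (n m j : ℕ) (hmn : m ≤ n) (hj : j + 1 ≤ n) (w : ℕ → ℝ) :
    ∑ i ∈ range (j + 2), hsP n m (j + 1) i * w i
      = ∑ i ∈ range (j + 1), hsP n m j i *
          (((((n : ℝ) - j) - ((m : ℝ) - i)) / ((n : ℝ) - j)) * w i
            + (((m : ℝ) - i) / ((n : ℝ) - j)) * w (i + 1)) := by
  have hN1 : ((n.choose j : ℝ)) ≠ 0 := by
    have : (0:ℝ) < (n.choose j : ℝ) := by exact_mod_cast Nat.choose_pos (by omega)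
    exact this.ne'
  have hN2 : ((n.choose (j+1) : ℝ)) ≠ 0 := by
    have : (0:ℝ) < (n.choose (j+1) : ℝ) := by exact_mod_cast Nat.choose_pos hj
    exact this.ne'
  have hnj : ((n : ℝ) - j) ≠ 0 := by
    have : (j : ℝ) + 1 ≤ (n : ℝ) := by exact_mod_cast hj
    nlinarith
  have hF3 : (n.choose (j + 1) : ℝ) * ((j : ℝ) + 1) = (n.choose j : ℝ) * ((n : ℝ) - j) := by
    simpa using hs_cast_choose n j
  set A : ℕ → ℝ := fun i => if i ≤ j then hsP n m j i *
      (((((n : ℝ) - j) - ((m : ℝ) - i)) / ((n : ℝ) - j)) * w i) else 0 with hA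
  set G : ℕ → ℝ := fun i => if i = 0 then 0 else hsP n m j (i - 1) *
      ((((m : ℝ) - ((i:ℝ) - 1)) / ((n : ℝ) - j)) * w i) with hG
  have hpoint : ∀ i ∈ range (j + 2), hsP n m (j + 1) i * w i = A i + G i := by
    intro i hi
    have hij : i ≤ j + 1 := by
      have := mem_range.mp hi
      omega
    rcases Nat.eq_zero_or_pos i with rfl | hi0
    · simp only [hA, hG, if_pos (Nat.zero_le j), if_pos rfl, add_zero]
      have key : hsP n m (j + 1) 0 = hsP n m j 0 *
          ((((n : ℝ) - j) - ((m : ℝ) - (0:ℕ))) / ((n : ℝ) - j)) := by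
        unfold hsP
        rw [Nat.sub_zero, Nat.sub_zero]
        refine hs_frac1 _ _ _ _ _ _ ((j:ℝ)+1) hN1 hN2 hnj hF3 ?_
        have hF1 : ((n - m).choose (j + 1) : ℝ) * ((j : ℝ) + 1)
            = ((n - m).choose j : ℝ) * (((n : ℝ) - m) - j) := by
          have h := hs_cast_choose (n - m) j
          rwa [Nat.cast_sub hmn] at h
        push_cast
        linear_combination (m.choose 0 : ℝ) * hF1
      rw [key]
      push_cast
      ring
    · have hij2 : i ≤ j + 1 := by
        have := mem_range.mp hi; omega
      rcases Nat.lt_or_ge i (j + 1) with hilt | hieq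
      · have hij' : i ≤ j := by omega
        obtain ⟨i', rfl⟩ : ∃ i', i = i' + 1 := ⟨i - 1, by omega⟩
        simp only [hA, hG, if_pos hij', if_neg (Nat.succ_ne_zero i'), Nat.add_sub_cancel]
        have key : hsP n m (j + 1) (i' + 1) = hsP n m j (i' + 1) *
            ((((n : ℝ) - j) - ((m : ℝ) - ((i':ℝ) + 1))) / ((n : ℝ) - j))
            + hsP n m j i' * (((m : ℝ) - (i':ℝ)) / ((n : ℝ) - j)) := by
          have hidx1 : j + 1 - (i' + 1) = (j - (i' + 1)) + 1 := by omega
          have hidx2 : j - i' = (j - (i' + 1)) + 1 := by omega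
          unfold hsP
          rw [hidx1, hidx2]
          refine hs_frac2 _ _ _ _ _ _ _ _ ((j:ℝ)+1) hN1 hN2 hnj hF3 ?_
          have hF1 : ((n - m).choose ((j - (i' + 1)) + 1) : ℝ) * (((j : ℝ) - ((i':ℝ) + 1)) + 1)
              = ((n - m).choose (j - (i' + 1)) : ℝ)
                  * (((n : ℝ) - m) - ((j : ℝ) - ((i':ℝ) + 1))) := by
            have h := hs_cast_choose (n - m) (j - (i' + 1))
            rw [Nat.cast_sub hmn, Nat.cast_sub (show i' + 1 ≤ j by omega)] at h
            push_cast at h ⊢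
            linear_combination h
          have hF2 : (m.choose (i' + 1) : ℝ) * ((i' : ℝ) + 1)
              = (m.choose i' : ℝ) * ((m : ℝ) - i') := by
            have h := hs_cast_choose m i'
            push_cast at h ⊢
            linear_combination h
          linear_combination (m.choose (i'+1) : ℝ) * hF1
            + (((n - m).choose ((j - (i' + 1)) + 1) : ℝ)) * hF2
        rw [key]
        push_cast
        ring
      · have : i = j + 1 := by omega
        subst this
        simp only [hA, hG, if_neg (show ¬ j + 1 ≤ j by omega), if_neg (Nat.succ_ne_zero j),
          Nat.add_sub_cancel, zero_add]
        have key : hsP n m (j + 1) (j + 1)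
            = hsP n m j j * (((m : ℝ) - (j:ℝ)) / ((n : ℝ) - j)) := by
          unfold hsP
          rw [Nat.sub_self, Nat.sub_self]
          refine hs_frac1 _ _ _ _ _ _ ((j:ℝ)+1) hN1 hN2 hnj hF3 ?_
          have hF2 : (m.choose (j + 1) : ℝ) * ((j : ℝ) + 1)
              = (m.choose j : ℝ) * ((m : ℝ) - j) := hs_cast_choose m j
          linear_combination (((n-m).choose 0 : ℝ)) * hF2
        rw [key]
        push_cast
        ring
  rw [Finset.sum_congr rfl hpoint, Finset.sum_add_distrib]
  have hGsum : ∑ i ∈ range (j + 2), G i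
      = ∑ i ∈ range (j + 1), hsP n m j i * ((((m : ℝ) - i) / ((n : ℝ) - j)) * w (i + 1)) := by
    rw [Finset.sum_range_succ' G (j + 1)]
    have hG0 : G 0 = 0 := by simp [hG]
    rw [hG0, add_zero]
    refine Finset.sum_congr rfl fun i _ => ?_
    simp only [hG, if_neg (Nat.succ_ne_zero i), Nat.add_sub_cancel]
    push_cast
    ring
  have hAsum : ∑ i ∈ range (j + 2), A i
      = ∑ i ∈ range (j + 1), hsP n m j i *
          (((((n : ℝ) - j) - ((m : ℝ) - i)) / ((n : ℝ) - j)) * w i) := by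
    rw [Finset.sum_range_succ]
    have hAtop : A (j + 1) = 0 := by simp [hA]
    rw [hAtop, add_zero]
    refine Finset.sum_congr rfl fun i hi => ?_
    simp only [hA, if_pos (show i ≤ j by have := mem_range.mp hi; omega)]
  rw [hGsum, hAsum, ← Finset.sum_add_distrib]
  exact Finset.sum_congr rfl fun i _ => by ring

lemma hsF_def (n j : ℕ) : hsF n j = ∑ t ∈ Finset.range j, (((n : ℝ) - (t + 1))⁻¹) ^ 2 := rfl

lemma hsP_zero (n m : ℕ) : hsP n m 0 0 = 1 := by
  unfold hsP; simp

lemma hs_two_point (θ a b x : ℝ) (h0 : 0 ≤ θ) (h1 : θ ≤ 1) :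
    (1 - θ) * Real.exp (x * a) + θ * Real.exp (x * b) ≤
      Real.exp (x * ((1 - θ) * a + θ * b) + x ^ 2 * (b - a) ^ 2 / 8) := by
  have h := hs_hoeffding_core θ h0 h1 (x * (b - a))
  have e1 : Real.exp (x * b) = Real.exp (x * a) * Real.exp (x * (b - a)) := by
    rw [← Real.exp_add]; ring_nf
  calc (1 - θ) * Real.exp (x * a) + θ * Real.exp (x * b)
      = Real.exp (x * a) * (1 - θ + θ * Real.exp (x * (b - a))) := by rw [e1]; ring
    _ ≤ Real.exp (x * a) * Real.exp (θ * (x * (b - a)) + (x * (b - a)) ^ 2 / 8) :=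
        mul_le_mul_of_nonneg_left h (Real.exp_pos _).le
    _ = Real.exp (x * ((1 - θ) * a + θ * b) + x ^ 2 * (b - a) ^ 2 / 8) := by
        rw [← Real.exp_add]; congr 1; ring

lemma hs_mgf (n m : ℕ) (hmn : m ≤ n) :
    ∀ j, j + 1 ≤ n → ∀ x : ℝ,
      ∑ i ∈ range (j + 1), hsP n m j i *
          Real.exp (x * (((i : ℝ) - (j : ℝ) * ((m : ℝ) / n)) / ((n : ℝ) - j)))
        ≤ Real.exp (x ^ 2 / 8 * hsF n j) := by
  intro j
  induction j with
  | zero =>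
      intro _ x
      rw [hsF_def]
      simp [hsP_zero]
  | succ j ih =>
      intro hj x
      have hj' : j + 1 ≤ n := by omega
      have hn2 : (j : ℝ) + 2 ≤ (n : ℝ) := by exact_mod_cast hj
      have hd2 : (0:ℝ) < (n : ℝ) - ((j:ℝ) + 1) := by linarith
      have hd1 : (0:ℝ) < (n : ℝ) - (j:ℝ) := by linarith
      have hn0 : (0:ℝ) < (n:ℝ) := by
        have : (0:ℝ) ≤ (j:ℝ) := Nat.cast_nonneg j
        linarith
      set w : ℕ → ℝ := fun i =>
        Real.exp (x * (((i : ℝ) - ((j:ℝ)+1) * ((m:ℝ)/n)) / ((n : ℝ) - ((j:ℝ)+1)))) with hw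
      have hL : ∑ i ∈ range (j + 1 + 1), hsP n m (j+1) i *
          Real.exp (x * (((i : ℝ) - ((j+1 : ℕ) : ℝ) * ((m:ℝ)/n)) / ((n : ℝ) - ((j+1:ℕ):ℝ))))
          = ∑ i ∈ range (j + 2), hsP n m (j + 1) i * w i := by
        refine Finset.sum_congr rfl fun i _ => ?_
        simp only [hw]
        push_cast
        ring_nf
      rw [hL, hs_step n m j hmn hj' w]
      set C : ℝ := Real.exp (x ^ 2 / 8 * (((n:ℝ) - ((j:ℝ)+1))⁻¹) ^ 2) with hC
      have hpt : ∀ i ∈ range (j + 1), hsP n m j i *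
          (((((n : ℝ) - j) - ((m : ℝ) - i)) / ((n : ℝ) - j)) * w i
            + (((m : ℝ) - i) / ((n : ℝ) - j)) * w (i + 1))
          ≤ hsP n m j i *
            (C * Real.exp (x * (((i : ℝ) - (j : ℝ) * ((m : ℝ) / n)) / ((n : ℝ) - j)))) := by
        intro i hi
        by_cases h0 : hsP n m j i = 0
        · rw [h0]; simp
        · obtain ⟨him, hnm⟩ := hs_supp h0
          have hij : i ≤ j := by have := mem_range.mp hi; omega
          have hcast : m + j ≤ n + i := by omega
          have hmle : (m:ℝ) - i ≤ (n:ℝ) - j := by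
            have : (m:ℝ) + j ≤ (n:ℝ) + i := by exact_mod_cast hcast
            linarith
          have hmge : (0:ℝ) ≤ (m:ℝ) - i := by
            have : (i:ℝ) ≤ (m:ℝ) := by exact_mod_cast him
            linarith
          set θ : ℝ := ((m:ℝ) - i)/((n:ℝ) - j) with hθ
          have hθ0 : 0 ≤ θ := div_nonneg hmge hd1.le
          have hθ1 : θ ≤ 1 := by rw [div_le_one hd1]; exact hmle
          set a : ℝ := ((i:ℝ) - ((j:ℝ)+1) * ((m:ℝ)/n)) / ((n : ℝ) - ((j:ℝ)+1)) with ha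
          set b : ℝ := (((i:ℝ)+1) - ((j:ℝ)+1) * ((m:ℝ)/n)) / ((n : ℝ) - ((j:ℝ)+1)) with hb
          have h2p := hs_two_point θ a b x hθ0 hθ1
          have hα : (((n : ℝ) - j) - ((m : ℝ) - i)) / ((n : ℝ) - j) = 1 - θ := by
            rw [hθ]
            field_simp
          have hwa : w i = Real.exp (x * a) := rfl
          have hwb : w (i+1) = Real.exp (x * b) := by
            simp only [hw, hb]
            push_cast
            ring_nf
          have hmean : (1 - θ) * a + θ * b
              = ((i : ℝ) - (j : ℝ) * ((m : ℝ) / n)) / ((n : ℝ) - j) := by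
            rw [hθ, ha, hb]
            field_simp
            ring
          have hvar : x ^ 2 * (b - a) ^ 2 / 8
              = x ^ 2 / 8 * (((n:ℝ) - ((j:ℝ)+1))⁻¹) ^ 2 := by
            rw [ha, hb]
            rw [div_sub_div_same]
            ring_nf
          rw [hα, hwa, hwb]
          refine mul_le_mul_of_nonneg_left ?_ (hsP_nonneg n m j i)
          calc (1 - θ) * Real.exp (x * a) + θ * Real.exp (x * b)
              ≤ Real.exp (x * ((1 - θ) * a + θ * b) + x ^ 2 * (b - a) ^ 2 / 8) := h2p
            _ = C * Real.exp (x * (((i : ℝ) - (j : ℝ) * ((m : ℝ) / n)) / ((n : ℝ) - j))) := by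
                rw [hmean, hvar, hC, ← Real.exp_add]
                ring_nf
      calc ∑ i ∈ range (j + 1), hsP n m j i *
          (((((n : ℝ) - j) - ((m : ℝ) - i)) / ((n : ℝ) - j)) * w i
            + (((m : ℝ) - i) / ((n : ℝ) - j)) * w (i + 1))
          ≤ ∑ i ∈ range (j + 1), hsP n m j i *
            (C * Real.exp (x * (((i : ℝ) - (j : ℝ) * ((m : ℝ) / n)) / ((n : ℝ) - j)))) :=
            Finset.sum_le_sum hpt
        _ = C * ∑ i ∈ range (j + 1), hsP n m j i *
            Real.exp (x * (((i : ℝ) - (j : ℝ) * ((m : ℝ) / n)) / ((n : ℝ) - j))) := by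
            rw [Finset.mul_sum]
            exact Finset.sum_congr rfl fun i _ => by ring
        _ ≤ C * Real.exp (x ^ 2 / 8 * hsF n j) := by
            refine mul_le_mul_of_nonneg_left (ih hj' x) ?_
            rw [hC]
            positivity
        _ = Real.exp (x ^ 2 / 8 * hsF n (j + 1)) := by
            rw [hC, ← Real.exp_add, hsF_def n (j+1), Finset.sum_range_succ, ← hsF_def]
            ring_nf
lemma hsF_pos (n j : ℕ) (hj : 1 ≤ j) (hn : 2 ≤ n) : 0 < hsF n j := by
  unfold hsF
  refine Finset.sum_pos' (fun t _ => by positivity) ⟨0, Finset.mem_range.mpr (by omega), ?_⟩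
  have h1 : (2:ℝ) ≤ (n:ℝ) := by exact_mod_cast hn
  have h2 : (0:ℝ) < (n:ℝ) - (((0:ℕ):ℝ) + 1) := by push_cast; linarith
  exact pow_pos (inv_pos.mpr h2) 2

lemma hsF_le (n : ℕ) : ∀ j, j + 1 ≤ n →
    hsF n j ≤ (j:ℝ) * ((n:ℝ) - j + 1) / ((n:ℝ) * ((n:ℝ) - j) ^ 2) := by
  intro j
  induction j with
  | zero => intro _; simp [hsF]
  | succ j ih =>
      intro hj
      have hj' : j + 1 ≤ n := by omega
      have hc : (j:ℝ) + 2 ≤ (n:ℝ) := by exact_mod_cast hj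
      have hb : (0:ℝ) ≤ (j:ℝ) := Nat.cast_nonneg j
      set b : ℝ := (j:ℝ) with hbdef
      set c : ℝ := (n:ℝ) with hcdef
      have hc0 : (0:ℝ) < c := by linarith
      have hcb : (0:ℝ) < c - b - 1 := by linarith
      have hcb2 : (0:ℝ) < c - b := by linarith
      have hsucc : hsF n (j + 1) = hsF n j + ((c - (b + 1))⁻¹) ^ 2 := by
        unfold hsF
        rw [Finset.sum_range_succ]
      rw [hsucc]
      have hIH := ih hj'
      have hgoal : b * (c - b + 1) / (c * (c - b) ^ 2) + ((c - (b + 1))⁻¹) ^ 2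
          ≤ (b + 1) * (c - (b + 1) + 1) / (c * (c - (b + 1)) ^ 2) := by
        have hinv : ((c - (b + 1))⁻¹) ^ 2 = 1 / ((c - b - 1) ^ 2) := by
          rw [show c - (b + 1) = c - b - 1 by ring, inv_eq_one_div, div_pow, one_pow]
        have hring : (b + 1) * (c - b) ^ 3
            - (b * (c - b + 1) * (c - b - 1) ^ 2 + c * (c - b) ^ 2) = b * (c - b - 1) := by
          ring
        have hkey : b * (c - b + 1) * (c - b - 1) ^ 2 + c * (c - b) ^ 2
            ≤ (b + 1) * (c - b) ^ 3 := by
          nlinarith [mul_nonneg hb hcb.le]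
        rw [hinv, show c - (b + 1) + 1 = c - b by ring, show c - (b + 1) = c - b - 1 by ring]
        rw [div_add_div _ _ (by positivity) (by positivity)]
        calc (b * (c - b + 1) * (c - b - 1) ^ 2 + c * (c - b) ^ 2 * 1)
              / (c * (c - b) ^ 2 * (c - b - 1) ^ 2)
            ≤ ((b + 1) * (c - b) * (c - b) ^ 2) / (c * (c - b) ^ 2 * (c - b - 1) ^ 2) := by
              have h2 : b * (c - b + 1) * (c - b - 1) ^ 2 + c * (c - b) ^ 2 * 1
                  ≤ (b + 1) * (c - b) * (c - b) ^ 2 := by nlinarith [hkey]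
              exact (div_le_div_iff_of_pos_right (by positivity)).mpr h2
          _ = (b + 1) * (c - b) / (c * (c - b - 1) ^ 2) := by
              rw [div_eq_div_iff (by positivity) (by positivity)]
              ring
      calc hsF n j + ((c - (b + 1))⁻¹) ^ 2
          ≤ b * (c - b + 1) / (c * (c - b) ^ 2) + ((c - (b + 1))⁻¹) ^ 2 := by linarith
        _ ≤ (b + 1) * (c - (b + 1) + 1) / (c * (c - (b + 1)) ^ 2) := hgoal
        _ = ((j+1:ℕ):ℝ) * ((n:ℝ) - ((j+1:ℕ):ℝ) + 1) / ((n:ℝ) * ((n:ℝ) - ((j+1:ℕ):ℝ)) ^ 2) := by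
            push_cast
            rw [hbdef, hcdef]
lemma hs_key (n m k i : ℕ) (hmn : m ≤ n) (hkn : k ≤ n) (him : i ≤ m) (hik : i ≤ k)
    (hnm : k - i ≤ n - m) : hsP n m (n - k) (m - i) = hsP n m k i := by
  unfold hsP
  have e2 : (n - k) - (m - i) = (n - m) - (k - i) := by omega
  rw [Nat.choose_symm him, e2, Nat.choose_symm hnm, Nat.choose_symm hkn]

lemma hs_flip (n m k : ℕ) (hmn : m ≤ n) (hkn : k ≤ n) (w : ℕ → ℝ) :
    ∑ i ∈ range (k + 1), hsP n m k i * w i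
      = ∑ r ∈ range ((n - k) + 1), hsP n m (n - k) r * w (m - r) := by
  classical
  rw [← Finset.sum_filter_of_ne
      (s := range (k + 1)) (f := fun i => hsP n m k i * w i)
      (p := fun i => hsP n m k i ≠ 0)
      (fun i _ h => fun hP => h (by simp [hP])),
    ← Finset.sum_filter_of_ne
      (s := range ((n - k) + 1)) (f := fun r => hsP n m (n - k) r * w (m - r))
      (p := fun r => hsP n m (n - k) r ≠ 0)
      (fun r _ h => fun hP => h (by simp [hP]))]
  refine Finset.sum_nbij' (fun i => m - i) (fun r => m - r) ?_ ?_ ?_ ?_ ?_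
  · intro i hi
    simp only [Finset.mem_filter, Finset.mem_range] at hi
    obtain ⟨hir, hne⟩ := hi
    obtain ⟨him, hnm⟩ := hs_supp hne
    have hik : i ≤ k := by omega
    refine Finset.mem_filter.mpr ⟨Finset.mem_range.mpr (show m - i < n - k + 1 by omega), ?_⟩
    show hsP n m (n - k) (m - i) ≠ 0
    rw [hs_key n m k i hmn hkn him hik hnm]
    exact hne
  · intro r hr
    simp only [Finset.mem_filter, Finset.mem_range] at hr
    obtain ⟨hrr, hne⟩ := hr
    obtain ⟨hrm, hnm⟩ := hs_supp hne
    have hrk : r ≤ n - k := by omega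
    have hkey := hs_key n m (n - k) r hmn (by omega) hrm hrk (by omega)
    rw [show n - (n - k) = k from by omega] at hkey
    refine Finset.mem_filter.mpr ⟨Finset.mem_range.mpr (show m - r < k + 1 by omega), ?_⟩
    show hsP n m k (m - r) ≠ 0
    rw [hkey]
    exact hne
  · intro i hi
    simp only [Finset.mem_filter, Finset.mem_range] at hi
    obtain ⟨him, _⟩ := hs_supp hi.2
    show m - (m - i) = i
    omega
  · intro r hr
    simp only [Finset.mem_filter, Finset.mem_range] at hr
    obtain ⟨hrm, _⟩ := hs_supp hr.2
    show m - (m - r) = r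
    omega
  · intro i hi
    simp only [Finset.mem_filter, Finset.mem_range] at hi
    obtain ⟨hir, hne⟩ := hi
    obtain ⟨him, hnm⟩ := hs_supp hne
    have hik : i ≤ k := by omega
    show hsP n m k i * w i = hsP n m (n - k) (m - i) * w (m - (m - i))
    rw [hs_key n m k i hmn hkn him hik hnm, show m - (m - i) = i from by omega]

end HSAux

theorem hoeffding_serfling_overestimation (n m k : ℕ) (hn : 2 ≤ n) (hm0 : 0 < m) (hmn : m ≤ n)
    (hk1 : 1 ≤ k) (hkn : k < n) (p : ℝ) (hp : p = (m : ℝ) / n) (q : ℝ) (hq : 1 ≤ q) :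
    hyperProb n m k (fun i => (k : ℝ) * p * q < (i : ℝ)) ≤
      Real.exp (-(2 * k * (p * q - p) ^ 2) / rho n k) := by
  classical
  have hn0 : (0:ℝ) < (n:ℝ) := by exact_mod_cast (show 0 < n by omega)
  have hk0 : (0:ℝ) < (k:ℝ) := by exact_mod_cast hk1
  have hnk : (0:ℝ) < (n:ℝ) - (k:ℝ) := by
    have : (k:ℝ) + 1 ≤ (n:ℝ) := by exact_mod_cast hkn
    linarith
  have hp0 : 0 ≤ p := by rw [hp]; positivity
  set t : ℝ := p * q - p with ht
  have ht0 : 0 ≤ t := by nlinarith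
  have hPB : hyperProb n m k (fun i => (k : ℝ) * p * q < (i : ℝ))
      = ∑ i ∈ Finset.range (k+1), hsP n m k i * (if (k:ℝ)*p*q < (i:ℝ) then (1:ℝ) else 0) := by
    unfold hyperProb hsP
    refine Finset.sum_congr rfl fun i _ => ?_
    by_cases hcond : (k:ℝ)*p*q < (i:ℝ) <;> simp [hcond]
  rw [hPB]
  by_cases hcase : (k : ℝ) ≤ (n : ℝ) / 2
  · have hrho : rho n k = ((n:ℝ) - k + 1) / n := by
      unfold rho
      rw [if_pos hcase]
      field_simp
      ring
    set f : ℝ := hsF n k with hf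
    have hf0 : 0 < f := hsF_pos n k hk1 hn
    set y : ℝ := (k:ℝ) * t / ((n:ℝ) - k) with hy
    have hy0 : 0 ≤ y := by positivity
    set L : ℝ := 4 * y / f with hL
    have hL0 : 0 ≤ L := by positivity
    have hpt : ∀ i ∈ Finset.range (k+1),
        hsP n m k i * (if (k:ℝ)*p*q < (i:ℝ) then (1:ℝ) else 0)
        ≤ hsP n m k i * (Real.exp (-(L*y)) *
            Real.exp (L * (((i:ℝ) - (k:ℝ)*((m:ℝ)/n)) / ((n:ℝ) - (k:ℝ))))) := by
      intro i _
      refine mul_le_mul_of_nonneg_left ?_ (hsP_nonneg n m k i)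
      rw [← Real.exp_add]
      have harg : -(L*y) + L * (((i:ℝ) - (k:ℝ)*((m:ℝ)/n)) / ((n:ℝ) - (k:ℝ)))
          = L * (((i:ℝ) - (k:ℝ)*p*q) / ((n:ℝ) - (k:ℝ))) := by
        rw [hy, ht, hp]
        field_simp
        ring
      rw [harg]
      by_cases hcond : (k:ℝ)*p*q < (i:ℝ)
      · rw [if_pos hcond]
        have hnn : (0:ℝ) ≤ ((i:ℝ) - (k:ℝ)*p*q) / ((n:ℝ) - (k:ℝ)) :=
          div_nonneg (by linarith) hnk.le
        calc (1:ℝ) = Real.exp 0 := Real.exp_zero.symm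
          _ ≤ _ := Real.exp_le_exp.mpr (by positivity)
      · rw [if_neg hcond]
        positivity
    calc ∑ i ∈ Finset.range (k+1), hsP n m k i * (if (k:ℝ)*p*q < (i:ℝ) then (1:ℝ) else 0)
        ≤ ∑ i ∈ Finset.range (k+1), hsP n m k i * (Real.exp (-(L*y)) *
            Real.exp (L * (((i:ℝ) - (k:ℝ)*((m:ℝ)/n)) / ((n:ℝ) - (k:ℝ))))) :=
          Finset.sum_le_sum hpt
      _ = Real.exp (-(L*y)) * ∑ i ∈ Finset.range (k+1), hsP n m k i *
            Real.exp (L * (((i:ℝ) - (k:ℝ)*((m:ℝ)/n)) / ((n:ℝ) - (k:ℝ)))) := by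
          rw [Finset.mul_sum]
          exact Finset.sum_congr rfl fun i _ => by ring
      _ ≤ Real.exp (-(L*y)) * Real.exp (L^2/8 * f) := by
          refine mul_le_mul_of_nonneg_left ?_ (Real.exp_pos _).le
          exact hs_mgf n m hmn k (by omega) L
      _ = Real.exp (-(L*y) + L^2/8*f) := (Real.exp_add _ _).symm
      _ ≤ Real.exp (-(2 * (k:ℝ) * t ^ 2) / (((n:ℝ) - k + 1) / n)) := by
          apply Real.exp_le_exp.mpr
          have he1 : -(L*y) + L^2/8*f = -(2*y^2/f) := by
            rw [hL]
            field_simp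
            ring
          rw [he1, neg_div]
          apply neg_le_neg
          have hgle : f ≤ (k:ℝ) * ((n:ℝ) - k + 1) / ((n:ℝ) * ((n:ℝ) - k)^2) :=
            hsF_le n k (by omega)
          have he2 : 2*(k:ℝ)*t^2 / (((n:ℝ) - k + 1)/n)
              = 2*y^2 / ((k:ℝ) * ((n:ℝ) - k + 1) / ((n:ℝ) * ((n:ℝ) - k)^2)) := by
            rw [hy]
            field_simp
          rw [he2]
          gcongr
      _ = Real.exp (-(2 * (k:ℝ) * t ^ 2) / rho n k) := by rw [hrho]
  · have hk2 : (n:ℝ)/2 < (k:ℝ) := lt_of_not_ge hcase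
    set u : ℕ := n - k with hudef
    have hu1 : 1 ≤ u := by omega
    have hun : u + 1 ≤ n := by omega
    have hu : ((u:ℕ):ℝ) = (n:ℝ) - (k:ℝ) := by
      rw [hudef]
      push_cast [Nat.cast_sub hkn.le]
      ring
    have hrho : rho n k = ((n:ℝ) - k) * ((k:ℝ) + 1) / ((n:ℝ) * k) := by
      unfold rho
      rw [if_neg hcase]
      field_simp
    set f : ℝ := hsF n u with hf
    have hf0 : 0 < f := hsF_pos n u hu1 hn
    set L : ℝ := 4 * t / f with hL
    have hL0 : 0 ≤ L := by positivity
    have hflip := hs_flip n m k hmn hkn.le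
      (fun i => if (k:ℝ)*p*q < (i:ℝ) then (1:ℝ) else 0)
    rw [hflip]
    have hpt : ∀ r ∈ Finset.range (u+1),
        hsP n m u r * (if (k:ℝ)*p*q < ((m - r : ℕ):ℝ) then (1:ℝ) else 0)
        ≤ hsP n m u r * (Real.exp (L * (-t)) *
            Real.exp ((-L) * (((r:ℝ) - (u:ℝ)*((m:ℝ)/n)) / ((n:ℝ) - (u:ℝ))))) := by
      intro r _
      by_cases h0 : hsP n m u r = 0
      · rw [h0]
        simp
      · refine mul_le_mul_of_nonneg_left ?_ (hsP_nonneg n m u r)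
        have hrm : r ≤ m := (hs_supp h0).1
        have hcast : ((m - r : ℕ):ℝ) = (m:ℝ) - (r:ℝ) := by
          push_cast [Nat.cast_sub hrm]
          ring
        rw [← Real.exp_add]
        have harg : L * (-t) + (-L) * (((r:ℝ) - (u:ℝ)*((m:ℝ)/n)) / ((n:ℝ) - (u:ℝ)))
            = L * (((m:ℝ) - (r:ℝ) - (k:ℝ)*p*q) / (k:ℝ)) := by
          rw [hu, ht, hp]
          have hnku : (n:ℝ) - ((n:ℝ) - (k:ℝ)) = (k:ℝ) := by ring
          rw [hnku]
          field_simp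
          ring
        rw [harg]
        by_cases hcond : (k:ℝ)*p*q < ((m - r : ℕ):ℝ)
        · rw [if_pos hcond]
          rw [hcast] at hcond
          have hnn : (0:ℝ) ≤ ((m:ℝ) - (r:ℝ) - (k:ℝ)*p*q) / (k:ℝ) :=
            div_nonneg (by linarith) hk0.le
          calc (1:ℝ) = Real.exp 0 := Real.exp_zero.symm
            _ ≤ _ := Real.exp_le_exp.mpr (by positivity)
        · rw [if_neg hcond]
          positivity
    calc ∑ r ∈ Finset.range (u+1), hsP n m u r *
          (if (k:ℝ)*p*q < ((m - r : ℕ):ℝ) then (1:ℝ) else 0)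
        ≤ ∑ r ∈ Finset.range (u+1), hsP n m u r * (Real.exp (L * (-t)) *
            Real.exp ((-L) * (((r:ℝ) - (u:ℝ)*((m:ℝ)/n)) / ((n:ℝ) - (u:ℝ))))) :=
          Finset.sum_le_sum hpt
      _ = Real.exp (L * (-t)) * ∑ r ∈ Finset.range (u+1), hsP n m u r *
            Real.exp ((-L) * (((r:ℝ) - (u:ℝ)*((m:ℝ)/n)) / ((n:ℝ) - (u:ℝ)))) := by
          rw [Finset.mul_sum]
          exact Finset.sum_congr rfl fun r _ => by ring
      _ ≤ Real.exp (L * (-t)) * Real.exp ((-L)^2/8 * f) := by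
          refine mul_le_mul_of_nonneg_left ?_ (Real.exp_pos _).le
          exact hs_mgf n m hmn u hun (-L)
      _ = Real.exp (L * (-t) + (-L)^2/8*f) := (Real.exp_add _ _).symm
      _ ≤ Real.exp (-(2 * (k:ℝ) * t ^ 2) / (((n:ℝ) - k) * ((k:ℝ) + 1) / ((n:ℝ) * k))) := by
          apply Real.exp_le_exp.mpr
          have he1 : L * (-t) + (-L)^2/8*f = -(2*t^2/f) := by
            rw [hL]
            field_simp
            ring
          rw [he1, neg_div]
          apply neg_le_neg
          have hgle : f ≤ (u:ℝ) * ((n:ℝ) - u + 1) / ((n:ℝ) * ((n:ℝ) - u)^2) :=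
            hsF_le n u hun
          rw [hu] at hgle
          have hgle2 : f ≤ ((n:ℝ) - k) * ((k:ℝ) + 1) / ((n:ℝ) * (k:ℝ)^2) := by
            have : (n:ℝ) - ((n:ℝ) - (k:ℝ)) = (k:ℝ) := by ring
            rw [this] at hgle
            calc f ≤ ((n:ℝ) - (k:ℝ)) * ((n:ℝ) - ((n:ℝ) - (k:ℝ)) + 1) / ((n:ℝ) * (k:ℝ)^2) := by
                  convert hgle using 3
                  ring
              _ = ((n:ℝ) - k) * ((k:ℝ) + 1) / ((n:ℝ) * (k:ℝ)^2) := by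
                  congr 2
                  ring
          have he2 : 2*(k:ℝ)*t^2 / (((n:ℝ) - k) * ((k:ℝ) + 1) / ((n:ℝ) * k))
              = 2*t^2 / (((n:ℝ) - k) * ((k:ℝ) + 1) / ((n:ℝ) * (k:ℝ)^2)) := by
            field_simp
          rw [he2]
          gcongr
      _ = Real.exp (-(2 * (k:ℝ) * t ^ 2) / rho n k) := by rw [hrho]
end
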